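/- arXiv:1807.11183 — 4 statements merged into one kernel-verified Lean document; each statement's English description precedes it below -/
import Mathlib

section
/- Let ℓ be a positive integer, and let S be a signature of Q_n such that ε_k(S) ≥ ℓ for all 1 ≤ k < n. Let X_1, ..., X_ℓ be distinct nonempty vertices of Q_n, and let x_t ∈ X_t for each t. Then there is an upright spanning tree T of Q_n with signature S such that ψ_T(X_t) = x_t for 1 ≤ t ≤ ℓ. -/
open SimpleGraph

/-- The `n`-cube: vertices are the subsets of `[n]` (modelled as `Finset (Fin n)`),
with an edge between `X` and `Y` iff their symmetric difference is a singleton. -/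
def cube (n : ℕ) : SimpleGraph (Finset (Fin n)) where
  Adj X Y := (symmDiff X Y).card = 1
  symm := by
    constructor
    intro X Y h
    rwa [symmDiff_comm]
  loopless := by
    constructor
    intro X h
    simp [symmDiff_self, Finset.bot_eq_empty] at h

/-- `T` is a spanning tree of `G` (both graphs on the same vertex set). -/
def IsSpanningTreeOf {V : Type*} (T G : SimpleGraph V) : Prop :=
  T ≤ G ∧ T.IsTree

/-- The edge `e` of the `n`-cube is in direction `i`. -/
def edgeInDir {n : ℕ} (i : Fin n) (e : Sym2 (Finset (Fin n))) : Prop :=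
  ∃ X : Finset (Fin n), e = s(X, symmDiff X {i})

/-- The number of edges of `T` in direction `i`. -/
noncomputable def dirCount {n : ℕ} (T : SimpleGraph (Finset (Fin n))) (i : Fin n) : ℕ :=
  {e | e ∈ T.edgeSet ∧ edgeInDir i e}.ncard

/-- `a` is the signature of the tree `T`. -/
def HasSig {n : ℕ} (T : SimpleGraph (Finset (Fin n))) (a : Fin n → ℕ) : Prop :=
  ∀ i, dirCount T i = a i

/-- `a` is a signature of `Q_n`, i.e. the signature of some spanning tree of the `n`-cube. -/
def IsSignature (n : ℕ) (a : Fin n → ℕ) : Prop :=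
  ∃ T, IsSpanningTreeOf T (cube n) ∧ HasSig T a

/-- A section of the set of nonempty subsets of `[n]`. -/
def IsSection {n : ℕ} (ψ : Finset (Fin n) → Fin n) : Prop :=
  ∀ X : Finset (Fin n), X.Nonempty → ψ X ∈ X

/-- The number of nonempty subsets on which the section `ψ` takes the value `i`. -/
noncomputable def secCount {n : ℕ} (ψ : Finset (Fin n) → Fin n) (i : Fin n) : ℕ :=
  {X : Finset (Fin n) | X.Nonempty ∧ ψ X = i}.ncard

/-- The tuple `a` reduces over `R` : `Σ_{i ∈ R} a i = 2^|R| - 1`. -/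
def ReducesOver {n : ℕ} (a : Fin n → ℕ) (R : Finset (Fin n)) : Prop :=
  ∑ i ∈ R, a i = 2 ^ R.card - 1

/-- `a` is reducible: it reduces over some proper nonempty subset of `[n]`. -/
def IsReducibleSig {n : ℕ} (a : Fin n → ℕ) : Prop :=
  ∃ R : Finset (Fin n), R.Nonempty ∧ R ≠ Finset.univ ∧ ReducesOver a R

/-- `a` is irreducible. -/
def IsIrreducibleSig {n : ℕ} (a : Fin n → ℕ) : Prop := ¬ IsReducibleSig a

/-- `T` is upright: every vertex `X` is at distance `|X|` in `T` from the root `∅`. -/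
def IsUpright {n : ℕ} (T : SimpleGraph (Finset (Fin n))) : Prop :=
  ∀ X : Finset (Fin n), T.dist X ∅ = X.card

/-- `ψ` is the section associated to the upright tree `T`: for each nonempty `X`,
`ψ X ∈ X` and `X - {ψ X}` is the next vertex after `X` on the path in `T` from `X` to `∅`. -/
def IsTreeSection {n : ℕ} (T : SimpleGraph (Finset (Fin n))) (ψ : Finset (Fin n) → Fin n) : Prop :=
  ∀ X : Finset (Fin n), X.Nonempty → ψ X ∈ X ∧ T.Adj X (X.erase (ψ X))

/-- The minimum of `Σ_{i ∈ K} a i` over the sets `K` of `k` directions. -/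
noncomputable def minSum {n : ℕ} (a : Fin n → ℕ) (k : ℕ) : ℕ :=
  sInf {m : ℕ | ∃ K : Finset (Fin n), K.card = k ∧ ∑ i ∈ K, a i = m}

/-- The excess of `a` at `k`. -/
noncomputable def excess {n : ℕ} (a : Fin n → ℕ) (k : ℕ) : ℤ :=
  (minSum a k : ℤ) - (2 ^ k - 1)

/-- The result of sliding the edge `e` in direction `i`. -/
def slideEdge {n : ℕ} (i : Fin n) (e : Sym2 (Finset (Fin n))) : Sym2 (Finset (Fin n)) :=
  Sym2.map (fun X => symmDiff X {i}) e

/-- The edge `e` of the spanning tree `T` of `Q_n` is `i`-slidable. -/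
def Slidable (n : ℕ) (T : SimpleGraph (Finset (Fin n))) (i : Fin n)
    (e : Sym2 (Finset (Fin n))) : Prop :=
  e ∈ T.edgeSet ∧
    IsSpanningTreeOf (SimpleGraph.fromEdgeSet ((T.edgeSet \ {e}) ∪ {slideEdge i e})) (cube n)

/-- The edge set `E` is (the edge set of) a spanning tree of the subgraph of the
`n`-cube induced on the vertex set `s`. -/
def IsSpanningTreeOn (n : ℕ) (s : Set (Finset (Fin n))) (E : Set (Sym2 (Finset (Fin n)))) : Prop :=
  E ⊆ (cube n).edgeSet ∧ (∀ e ∈ E, ∀ v ∈ e, v ∈ s) ∧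
    ((SimpleGraph.fromEdgeSet E).induce s).IsTree

/-- The edges of `T` with both endpoints in `s`. -/
def edgesWithin {n : ℕ} (s : Set (Finset (Fin n))) (T : SimpleGraph (Finset (Fin n))) :
    Set (Sym2 (Finset (Fin n))) :=
  {e | e ∈ T.edgeSet ∧ ∀ v ∈ e, v ∈ s}

/-- The edge `e` of the tree with edge set `E`, spanning the subgraph of the `n`-cube
induced on `s`, is `i`-slidable. -/
def SlidableOn (n : ℕ) (s : Set (Finset (Fin n))) (E : Set (Sym2 (Finset (Fin n))))
    (i : Fin n) (e : Sym2 (Finset (Fin n))) : Prop :=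
  e ∈ E ∧ IsSpanningTreeOn n s ((E \ {e}) ∪ {slideEdge i e})

/-- The number of edges of `T` in direction `i` with both endpoints in `s`. -/
noncomputable def dirCountOn {n : ℕ} (s : Set (Finset (Fin n)))
    (T : SimpleGraph (Finset (Fin n))) (i : Fin n) : ℕ :=
  {e | e ∈ T.edgeSet ∧ edgeInDir i e ∧ ∀ v ∈ e, v ∈ s}.ncard

/-- `T'` is a spanning tree of the `n`-cube obtained from the spanning tree `T` by a
single edge slide. -/
def SlideStep (n : ℕ) (T T' : SimpleGraph (Finset (Fin n))) : Prop :=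
  IsSpanningTreeOf T (cube n) ∧ IsSpanningTreeOf T' (cube n) ∧
    ∃ (i : Fin n) (e : Sym2 (Finset (Fin n))), e ∈ T.edgeSet ∧
      T' = SimpleGraph.fromEdgeSet ((T.edgeSet \ {e}) ∪ {slideEdge i e})

/-- The trees `T` and `T'` are related by a single edge slide. -/
def SlideAdj (n : ℕ) (T T' : SimpleGraph (Finset (Fin n))) : Prop :=
  T ≠ T' ∧ ∃ (i : Fin n) (e : Sym2 (Finset (Fin n))),
    (e ∈ T.edgeSet ∧ T' = SimpleGraph.fromEdgeSet ((T.edgeSet \ {e}) ∪ {slideEdge i e})) ∨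
    (e ∈ T'.edgeSet ∧ T = SimpleGraph.fromEdgeSet ((T'.edgeSet \ {e}) ∪ {slideEdge i e}))

/-- The spanning trees of the `n`-cube. -/
def SpanningTrees (n : ℕ) := {T : SimpleGraph (Finset (Fin n)) // IsSpanningTreeOf T (cube n)}

/-- The edge slide graph `E(n)` of the `n`-cube. -/
def eslide (n : ℕ) : SimpleGraph (SpanningTrees n) where
  Adj T T' := SlideAdj n T.1 T'.1
  symm := by
    constructor
    rintro T T' ⟨hne, i, e, h⟩
    exact ⟨hne.symm, i, e, h.symm⟩
  loopless := by
    constructor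
    rintro T ⟨hne, -⟩
    exact hne rfl

/-- The projection `π_R(T)` of `T` to `Q_R`: a graph on the subsets of `R`, with `A`
adjacent to `B` iff some edge of `T` projects to `{A, B}`. -/
def projTree (n : ℕ) (R : Finset (Fin n)) (T : SimpleGraph (Finset (Fin n))) :
    SimpleGraph ↥{W : Finset (Fin n) | W ⊆ R} where
  Adj A B := A.1 ≠ B.1 ∧ ∃ U V : Finset (Fin n), T.Adj U V ∧ U ∩ R = A.1 ∧ V ∩ R = B.1
  symm := by
    constructor
    rintro A B ⟨hne, U, V, hUV, hU, hV⟩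
    exact ⟨hne.symm, V, U, hUV.symm, hV, hU⟩
  loopless := by
    constructor
    rintro A ⟨hne, -⟩
    exact hne rfl

/-- The projected edge set `π_R(T)`: images under `π_R` of the edges of `T` in
directions belonging to `R`. -/
def projEdges {n : ℕ} (R : Finset (Fin n)) (T : SimpleGraph (Finset (Fin n))) :
    Set (Sym2 (Finset (Fin n))) :=
  {f | ∃ e ∈ T.edgeSet, (∃ i ∈ R, edgeInDir i e) ∧ f = Sym2.map (· ∩ R) e}

/-- The decomposition `T ↦ (F_T, (T(R,X))_{X ⊆ R})` of a tree reducing over `R`. -/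
def decompose (n : ℕ) (R : Finset (Fin n)) (T : SimpleGraph (Finset (Fin n))) :
    Set (Sym2 (Finset (Fin n))) ×
      ((X : Finset (Fin n)) → X ⊆ R → SimpleGraph ↥{W : Finset (Fin n) | W ∩ R = X}) :=
  ⟨{e | e ∈ T.edgeSet ∧ ∃ i ∈ R, edgeInDir i e},
   fun X _ => T.induce {W : Finset (Fin n) | W ∩ R = X}⟩

/-- `s` is the least index such that `ε_k(a) = 0` for all `s ≤ k ≤ n`; i.e. the
entries of (an ordered) `a` with index `≤ s` form the unsaturated part of `a`. -/
def UnsatIndex (n : ℕ) (a : Fin n → ℕ) (s : ℕ) : Prop :=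
  (∀ k, s ≤ k → k ≤ n → excess a k = 0) ∧
    ∀ s' < s, ¬ (∀ k, s' ≤ k → k ≤ n → excess a k = 0)

/-- The restriction of `a` to its first `s` entries is reducible (as a tuple of length `s`). -/
def ReducibleBelow {n : ℕ} (a : Fin n → ℕ) (s : ℕ) : Prop :=
  ∃ R : Finset (Fin n), R.Nonempty ∧ (∀ i ∈ R, (i : ℕ) < s) ∧ R.card < s ∧
    ∑ i ∈ R, a i = 2 ^ R.card - 1

/-- `a` is strictly reducible: it is reducible and its unsaturated part is reducible. -/
def StrictlyReducible (n : ℕ) (a : Fin n → ℕ) : Prop :=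
  IsReducibleSig a ∧
    ∃ (σ : Equiv.Perm (Fin n)) (s : ℕ), Monotone (a ∘ σ) ∧
      UnsatIndex n (a ∘ σ) s ∧ ReducibleBelow (a ∘ σ) s


namespace Stmt5Aux

open SimpleGraph Finset

variable {n : ℕ}

/-- one "parent" step of the section graph -/
def pstep (ψ : Finset (Fin n) → Fin n) (X Y : Finset (Fin n)) : Prop :=
  ψ X ∈ X ∧ Y = X.erase (ψ X)

lemma pstep_card {ψ : Finset (Fin n) → Fin n} {X Y : Finset (Fin n)}
    (h : pstep ψ X Y) : Y.card + 1 = X.card := by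
  obtain ⟨hm, he⟩ := h
  have h1 : 0 < X.card := Finset.card_pos.mpr ⟨_, hm⟩
  rw [he, Finset.card_erase_of_mem hm]
  omega

/-- the upright spanning tree determined by a section -/
def secGraph (ψ : Finset (Fin n) → Fin n) : SimpleGraph (Finset (Fin n)) where
  Adj X Y := pstep ψ X Y ∨ pstep ψ Y X
  symm := by constructor; rintro X Y (h | h); exacts [Or.inr h, Or.inl h]
  loopless := by
    constructor; rintro X (h | h) <;> exact absurd (pstep_card h) (by omega)

lemma symmDiff_erase {X : Finset (Fin n)} {i : Fin n} (h : i ∈ X) :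
    symmDiff X (X.erase i) = {i} := by
  ext j
  by_cases hj : j = i <;>
    simp [Finset.mem_symmDiff, Finset.mem_erase, hj, h] <;> tauto

lemma erase_symmDiff {X : Finset (Fin n)} {i : Fin n} (h : i ∈ X) :
    symmDiff (X.erase i) {i} = X := by
  ext j
  by_cases hj : j = i <;>
    simp [Finset.mem_symmDiff, Finset.mem_erase, hj, h] <;> tauto

lemma secGraph_le_cube (ψ : Finset (Fin n) → Fin n) : secGraph ψ ≤ cube n := by
  rintro X Y (⟨hm, he⟩ | ⟨hm, he⟩)
  · show (symmDiff X Y).card = 1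
    rw [he, symmDiff_erase hm, Finset.card_singleton]
  · show (symmDiff X Y).card = 1
    rw [symmDiff_comm, he, symmDiff_erase hm, Finset.card_singleton]

lemma mem_secGraph_edgeSet (ψ : Finset (Fin n) → Fin n) (e : Sym2 (Finset (Fin n))) :
    e ∈ (secGraph ψ).edgeSet ↔ ∃ X, ψ X ∈ X ∧ e = s(X, X.erase (ψ X)) := by
  induction e using Sym2.ind with
  | _ U V =>
    simp only [SimpleGraph.mem_edgeSet]
    constructor
    · rintro (⟨hm, he⟩ | ⟨hm, he⟩)
      · exact ⟨U, hm, by rw [← he]⟩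
      · exact ⟨V, hm, by rw [← he, Sym2.eq_swap]⟩
    · rintro ⟨Z, hm, he⟩
      rw [Sym2.eq_iff] at he
      rcases he with ⟨h1, h2⟩ | ⟨h1, h2⟩
      · subst h1; subst h2; exact Or.inl ⟨hm, rfl⟩
      · subst h1; subst h2; exact Or.inr ⟨hm, rfl⟩

lemma exists_walk_to_empty {ψ : Finset (Fin n) → Fin n} (hsec : IsSection ψ) :
    ∀ (m : ℕ) (X : Finset (Fin n)), X.card = m →
      ∃ w : (secGraph ψ).Walk X ∅, w.length = m := by
  intro m
  induction m with
  | zero =>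
    intro X hX
    rw [Finset.card_eq_zero] at hX
    subst hX
    exact ⟨.nil, rfl⟩
  | succ k ih =>
    intro X hX
    have hne : X.Nonempty := Finset.card_pos.mp (by omega)
    have hm := hsec X hne
    have hadj : (secGraph ψ).Adj X (X.erase (ψ X)) := Or.inl ⟨hm, rfl⟩
    obtain ⟨w, hw⟩ := ih (X.erase (ψ X)) (by rw [Finset.card_erase_of_mem hm, hX]; omega)
    exact ⟨.cons hadj w, by simp [hw]⟩

lemma secGraph_connected {ψ : Finset (Fin n) → Fin n} (hsec : IsSection ψ) :
    (secGraph ψ).Connected := by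
  rw [SimpleGraph.connected_iff]
  refine ⟨fun X Y => ?_, ⟨∅⟩⟩
  have hX : (secGraph ψ).Reachable X ∅ := ⟨(exists_walk_to_empty hsec X.card X rfl).choose⟩
  have hY : (secGraph ψ).Reachable Y ∅ := ⟨(exists_walk_to_empty hsec Y.card Y rfl).choose⟩
  exact hX.trans hY.symm

lemma card_le_walk_length' {ψ : Finset (Fin n) → Fin n} {X Y : Finset (Fin n)}
    (w : (secGraph ψ).Walk X Y) : X.card ≤ w.length + Y.card := by
  induction w with
  | nil => simp
  | @cons u v _ h p ih =>
    rcases id h with h | h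
    · have := pstep_card h; rw [SimpleGraph.Walk.length_cons]; omega
    · have := pstep_card h; rw [SimpleGraph.Walk.length_cons]; omega

lemma card_le_walk_length {ψ : Finset (Fin n) → Fin n} {X : Finset (Fin n)}
    (w : (secGraph ψ).Walk X ∅) : X.card ≤ w.length := by
  have := card_le_walk_length' w
  simpa using this

lemma secGraph_upright {ψ : Finset (Fin n) → Fin n} (hsec : IsSection ψ) :
    IsUpright (secGraph ψ) := by
  intro X
  obtain ⟨w, hw⟩ := exists_walk_to_empty hsec X.card X rfl
  refine le_antisymm (hw ▸ SimpleGraph.dist_le w) ?_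
  obtain ⟨p, hp⟩ := SimpleGraph.Reachable.exists_walk_length_eq_dist ⟨w⟩
  rw [← hp]
  exact card_le_walk_length p

end Stmt5Aux

namespace Stmt5Aux

open SimpleGraph Finset

variable {n : ℕ}

lemma no_cycle_at_max {ψ : Finset (Fin n) → Fin n} (X : Finset (Fin n))
    (c : (secGraph ψ).Walk X X) (hc : c.IsCycle)
    (hmax : ∀ y ∈ c.support, y.card ≤ X.card) : False := by
  cases c with
  | nil => exact hc.not_nil SimpleGraph.Walk.Nil.nil
  | @cons _ w _ h p =>
    rw [SimpleGraph.Walk.cons_isCycle_iff] at hc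
    obtain ⟨hp, he⟩ := hc
    have hwmem : w ∈ (SimpleGraph.Walk.cons h p).support := by
      rw [SimpleGraph.Walk.support_cons]
      exact List.mem_cons_of_mem _ p.start_mem_support
    have hwX : w.card ≤ X.card := hmax w hwmem
    have hw2 : w = X.erase (ψ X) := by
      rcases h with h' | h'
      · exact h'.2
      · have := pstep_card h'; omega
    have hXw : w.card + 1 = X.card := by
      rcases h with h' | h'
      · exact pstep_card h'
      · have h2 := pstep_card h'; omega
    have hrevnil : ¬ p.reverse.Nil :=
      SimpleGraph.Walk.not_nil_of_ne (by intro hwx; rw [hwx] at hXw; omega)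
    obtain ⟨u, hadj, q, hq⟩ := SimpleGraph.Walk.not_nil_iff.mp hrevnil
    have hu : u ∈ p.support := by
      have h1 : u ∈ p.reverse.support := by
        rw [hq, SimpleGraph.Walk.support_cons]
        exact List.mem_cons_of_mem _ q.start_mem_support
      rwa [SimpleGraph.Walk.support_reverse, List.mem_reverse] at h1
    have huX : u.card ≤ X.card := by
      apply hmax
      rw [SimpleGraph.Walk.support_cons]
      exact List.mem_cons_of_mem _ hu
    have hu2 : u = X.erase (ψ X) := by
      rcases hadj with h' | h'
      · exact h'.2
      · have := pstep_card h'; omega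
    have hmem : s(X, u) ∈ p.edges := by
      have h1 : s(X, u) ∈ p.reverse.edges := by
        rw [hq, SimpleGraph.Walk.edges_cons]
        exact List.mem_cons_self
      rwa [SimpleGraph.Walk.edges_reverse, List.mem_reverse] at h1
    rw [hu2, ← hw2] at hmem
    exact he hmem

lemma secGraph_acyclic (ψ : Finset (Fin n) → Fin n) : (secGraph ψ).IsAcyclic := by
  classical
  intro v c hc
  have hvs : v ∈ c.support.toFinset := by
    rw [List.mem_toFinset]; exact c.start_mem_support
  obtain ⟨Z, hZmem, hZmax⟩ :=
    Finset.exists_max_image c.support.toFinset Finset.card ⟨v, hvs⟩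
  rw [List.mem_toFinset] at hZmem
  have hc' : (c.rotate Z hZmem).IsCycle := hc.rotate hZmem
  refine no_cycle_at_max Z (c.rotate Z hZmem) hc' ?_
  intro y hy
  apply hZmax
  rw [List.mem_toFinset]
  rw [SimpleGraph.Walk.support_eq_cons] at hy
  rcases List.mem_cons.mp hy with rfl | hy'
  · exact hZmem
  · have := ((SimpleGraph.Walk.support_rotate c Z hZmem).perm.mem_iff).mp hy'
    rw [SimpleGraph.Walk.support_eq_cons]
    exact List.mem_cons_of_mem _ this

lemma secGraph_isTree {ψ : Finset (Fin n) → Fin n} (hsec : IsSection ψ) :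
    (secGraph ψ).IsTree := by
  rw [SimpleGraph.isTree_iff]
  exact ⟨secGraph_connected hsec, secGraph_acyclic ψ⟩

end Stmt5Aux

namespace Stmt5Aux

open SimpleGraph Finset

variable {n : ℕ}

/-- symmetric difference of the two endpoints of an edge -/
def sd : Sym2 (Finset (Fin n)) → Finset (Fin n) :=
  Sym2.lift ⟨fun X Y => symmDiff X Y, fun X Y => symmDiff_comm X Y⟩

@[simp] lemma sd_mk (U V : Finset (Fin n)) : sd s(U, V) = symmDiff U V := rfl

lemma edgeInDir_iff (i : Fin n) (e : Sym2 (Finset (Fin n))) :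
    edgeInDir i e ↔ sd e = {i} := by
  induction e using Sym2.ind with
  | _ U V =>
    constructor
    · rintro ⟨Z, hZ⟩
      rw [hZ, sd_mk, symmDiff_symmDiff_cancel_left]
    · intro h
      rw [sd_mk] at h
      refine ⟨U, ?_⟩
      rw [← h, symmDiff_symmDiff_cancel_left]

lemma dirCount_secGraph {ψ : Finset (Fin n) → Fin n} (hsec : IsSection ψ) (i : Fin n) :
    dirCount (secGraph ψ) i = {X : Finset (Fin n) | X.Nonempty ∧ ψ X = i}.ncard := by
  have hset : {e | e ∈ (secGraph ψ).edgeSet ∧ edgeInDir i e}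
      = (fun X => s(X, X.erase (ψ X))) '' {X : Finset (Fin n) | X.Nonempty ∧ ψ X = i} := by
    ext e
    constructor
    · rintro ⟨heE, hdir⟩
      obtain ⟨Z, hm, rfl⟩ := (mem_secGraph_edgeSet ψ e).mp heE
      rw [edgeInDir_iff, sd_mk, symmDiff_erase hm] at hdir
      have hψ : ψ Z = i := by
        have := Finset.mem_singleton.mp (hdir ▸ Finset.mem_singleton_self (ψ Z))
        exact this
      exact ⟨Z, ⟨⟨_, hm⟩, hψ⟩, rfl⟩
    · rintro ⟨Z, ⟨hne, hψ⟩, rfl⟩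
      refine ⟨(mem_secGraph_edgeSet ψ _).mpr ⟨Z, hsec Z hne, rfl⟩, ?_⟩
      rw [edgeInDir_iff, sd_mk, symmDiff_erase (hsec Z hne), hψ]
  rw [dirCount, hset, Set.ncard_image_of_injOn]
  rintro Z ⟨hne, -⟩ Z' ⟨hne', -⟩ heq
  rw [Sym2.eq_iff] at heq
  rcases heq with ⟨h1, -⟩ | ⟨h1, h2⟩
  · exact h1
  · exfalso
    have c1 : (Z'.erase (ψ Z')).card + 1 = Z'.card :=
      pstep_card ⟨hsec Z' hne', rfl⟩
    have c2 : (Z.erase (ψ Z)).card + 1 = Z.card :=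
      pstep_card ⟨hsec Z hne, rfl⟩
    rw [← h1] at c1
    rw [h2] at c2
    omega

lemma sd_card_of_cube {e : Sym2 (Finset (Fin n))} (he : e ∈ (cube n).edgeSet) :
    (sd e).card = 1 := by
  induction e using Sym2.ind with
  | _ U V => exact he

lemma sum_sig (hn : 0 < n) (T : SimpleGraph (Finset (Fin n)))
    (hT : IsSpanningTreeOf T (cube n)) (a : Fin n → ℕ) (hS : HasSig T a) :
    ∑ i, a i = 2 ^ n - 1 := by
  classical
  obtain ⟨hle, htree⟩ := hT
  haveI : Fintype ↥T.edgeSet := Set.Finite.fintype (Set.toFinite _)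
  have hcard := htree.card_edgeFinset
  have hV : Fintype.card (Finset (Fin n)) = 2 ^ n := by
    simp [Fintype.card_finset]
  have h1 : ∀ i, dirCount T i
      = (T.edgeFinset.filter (fun e => sd e = ({i} : Finset (Fin n)))).card := by
    intro i
    rw [dirCount,
      show {e | e ∈ T.edgeSet ∧ edgeInDir i e}
        = ↑(T.edgeFinset.filter fun e => sd e = ({i} : Finset (Fin n))) from by
          ext e
          simp [SimpleGraph.mem_edgeFinset, edgeInDir_iff],
      Set.ncard_coe_finset]
  have hdir : ∀ e ∈ T.edgeFinset, ∃ j, sd e = ({j} : Finset (Fin n)) := by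
    intro e he
    rw [SimpleGraph.mem_edgeFinset] at he
    exact Finset.card_eq_one.mp (sd_card_of_cube (SimpleGraph.edgeSet_mono hle he))
  set f : Sym2 (Finset (Fin n)) → Fin n :=
    fun e => if h : ∃ j, sd e = ({j} : Finset (Fin n)) then h.choose else ⟨0, hn⟩ with hf
  have key : T.edgeFinset.card = ∑ i, (T.edgeFinset.filter fun e => f e = i).card :=
    Finset.card_eq_sum_card_fiberwise (fun e _ => Finset.mem_univ _)
  have hfilter : ∀ i, T.edgeFinset.filter (fun e => sd e = ({i} : Finset (Fin n)))
      = T.edgeFinset.filter (fun e => f e = i) := by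
    intro i
    apply Finset.filter_congr
    intro e he
    have hj := hdir e he
    simp only [hf, dif_pos hj]
    constructor
    · intro h
      exact Finset.singleton_injective (hj.choose_spec.symm.trans h)
    · intro h
      rw [← h]
      exact hj.choose_spec
  have : ∑ i, a i = T.edgeFinset.card := by
    rw [key]
    refine Finset.sum_congr rfl fun i _ => ?_
    rw [← hS i, h1 i, hfilter i]
  omega

lemma card_nonempty_subsets :
    Fintype.card {X : Finset (Fin n) // X.Nonempty} = 2 ^ n - 1 := by
  classical
  have h1 : Fintype.card {X : Finset (Fin n) // X.Nonempty}
      = Fintype.card {X : Finset (Fin n) // ¬ X = ∅} :=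
    Fintype.card_congr (Equiv.subtypeEquivRight fun X => by
      simp [Finset.nonempty_iff_ne_empty])
  rw [h1, Fintype.card_subtype_compl]
  simp [Fintype.card_finset, Fintype.card_subtype_eq]

end Stmt5Aux

namespace Stmt5Aux

open SimpleGraph Finset

variable {n : ℕ}

lemma exists_section (hn : 0 < n) {ℓ : ℕ} (hℓ : 1 ≤ ℓ) (a : Fin n → ℕ)
    (hsum : ∑ i, a i = 2 ^ n - 1)
    (hex : ∀ k, 1 ≤ k → k < n → (ℓ : ℤ) ≤ excess a k)
    (X : Fin ℓ → Finset (Fin n)) (hXne : ∀ t, (X t).Nonempty)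
    (hXinj : Function.Injective X)
    (x : Fin ℓ → Fin n) (hx : ∀ t, x t ∈ X t) :
    ∃ ψ : Finset (Fin n) → Fin n, IsSection ψ ∧ (∀ t, ψ (X t) = x t) ∧
      ∀ i, {Z : Finset (Fin n) | Z.Nonempty ∧ ψ Z = i}.ncard = a i := by
  classical
  let ι := {Z : Finset (Fin n) // Z.Nonempty}
  let D : ι → Finset (Fin n) := fun Z => if h : ∃ t, X t = Z.val then {x h.choose} else Z.val
  let slot : Fin n → Finset (Fin n × ℕ) := fun i => (Finset.range (a i)).image (fun m => (i, m))
  let tfun : ι → Finset (Fin n × ℕ) := fun Z => (D Z).biUnion slot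
  have cardι : Fintype.card ι = 2 ^ n - 1 := card_nonempty_subsets
  have hslotcard : ∀ i, (slot i).card = a i := by
    intro i
    rw [Finset.card_image_of_injective _ (fun m m' h => (Prod.mk.injEq i m i m' ▸ h).2),
      Finset.card_range]
  have hslotfst : ∀ i p, p ∈ slot i → p.1 = i := by
    intro i p hp
    obtain ⟨m, -, rfl⟩ := Finset.mem_image.mp hp
    rfl
  have hD_ne : ∀ Z : ι, (D Z).Nonempty := by
    intro Z
    show (if h : ∃ t, X t = Z.val then ({x h.choose} : Finset (Fin n)) else Z.val).Nonempty
    split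
    · exact ⟨_, Finset.mem_singleton_self _⟩
    · exact Z.2
  have hD_sub : ∀ Z : ι, D Z ⊆ Z.val := by
    intro Z
    show (if h : ∃ t, X t = Z.val then ({x h.choose} : Finset (Fin n)) else Z.val) ⊆ Z.val
    split
    · rename_i h
      intro j hj
      rw [Finset.mem_singleton] at hj
      subst hj
      have h2 := hx h.choose
      rwa [h.choose_spec] at h2
    · exact subset_rfl
  have hall : ∀ s : Finset ι, s.card ≤ (s.biUnion tfun).card := by
    intro s
    rcases s.eq_empty_or_nonempty with rfl | hs
    · simp
    have hbU : s.biUnion tfun = (s.biUnion D).biUnion slot := (Finset.biUnion_biUnion s D slot).symm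
    set K := s.biUnion D with hK
    have hcardbU : (K.biUnion slot).card = ∑ i ∈ K, a i := by
      rw [Finset.card_biUnion]
      · exact Finset.sum_congr rfl fun i _ => hslotcard i
      · intro i _ j _ hij
        rw [Function.onFun, Finset.disjoint_left]
        intro p hpi hpj
        exact hij ((hslotfst i p hpi).symm.trans (hslotfst j p hpj))
    have hKne : K.Nonempty := by
      obtain ⟨Z, hZ⟩ := hs
      obtain ⟨j, hj⟩ := hD_ne Z
      exact ⟨j, Finset.mem_biUnion.mpr ⟨Z, hZ, hj⟩⟩
    have hk1 : 1 ≤ K.card := Finset.card_pos.mpr hKne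
    have hkn : K.card ≤ n := by
      have := K.card_le_univ
      simpa using this
    have hsplit := Finset.card_filter_add_card_filter_not
      (s := s) (fun Z => ∃ t, X t = Z.val)
    have hb1 : (s.filter (fun Z => ∃ t, X t = Z.val)).card ≤ ℓ := by
      have hle := Finset.card_le_card_of_injOn
        (f := fun Z : ι => if h : ∃ t, X t = Z.val then h.choose else ⟨0, hℓ⟩)
        (s := s.filter (fun Z => ∃ t, X t = Z.val)) (t := Finset.univ)
        (fun Z _ => Finset.mem_univ _) ?_
      · simpa using hle
      · intro Z hZ Z' hZ' heq
        rw [Finset.mem_coe, Finset.mem_filter] at hZ hZ'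
        obtain ⟨-, h⟩ := hZ
        obtain ⟨-, h'⟩ := hZ'
        simp only [dif_pos h, dif_pos h'] at heq
        apply Subtype.ext
        rw [← h.choose_spec, ← h'.choose_spec, heq]
    have hb2 : (s.filter (fun Z => ¬ ∃ t, X t = Z.val)).card ≤ 2 ^ K.card - 1 := by
      have hle := Finset.card_le_card_of_injOn (f := fun Z : ι => Z.val)
        (s := s.filter (fun Z => ¬ ∃ t, X t = Z.val)) (t := K.powerset.erase ∅)
        ?_ (fun Z _ Z' _ h => Subtype.ext h)
      · rwa [Finset.card_erase_of_mem (by simp), Finset.card_powerset] at hle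
      · intro Z hZ
        rw [Finset.mem_coe, Finset.mem_filter] at hZ
        obtain ⟨hZs, hZc⟩ := hZ
        rw [Finset.mem_coe, Finset.mem_erase, Finset.mem_powerset]
        refine ⟨Finset.nonempty_iff_ne_empty.mp Z.2, ?_⟩
        have hDZ : D Z = Z.val := dif_neg hZc
        have hsub := Finset.subset_biUnion_of_mem D hZs
        rwa [hDZ] at hsub
    rw [hbU, hcardbU]
    rcases eq_or_lt_of_le hkn with hEq | hlt
    · have hKuniv : K = Finset.univ := K.eq_univ_of_card (by simpa using hEq)
      have hsK : ∑ i ∈ K, a i = 2 ^ n - 1 := by rw [hKuniv]; exact hsum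
      have hsle : s.card ≤ 2 ^ n - 1 := by
        calc s.card ≤ Fintype.card ι := Finset.card_le_univ s
        _ = 2 ^ n - 1 := cardι
      omega
    · have hex' := hex K.card hk1 hlt
      have hmin : minSum a K.card ≤ ∑ i ∈ K, a i := Nat.sInf_le ⟨K, rfl, rfl⟩
      rw [excess] at hex'
      have h2k : 1 ≤ 2 ^ K.card := Nat.one_le_two_pow
      have hcast : ((2 ^ K.card : ℕ) : ℤ) = (2 : ℤ) ^ K.card := by push_cast; ring
      rw [← hcast] at hex'
      omega
  obtain ⟨f, hfinj, hfmem⟩ := (Finset.all_card_le_biUnion_card_iff_exists_injective tfun).mp hall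
  have hf1 : ∀ Z : ι, (f Z).1 ∈ D Z ∧ (f Z).2 < a (f Z).1 := by
    intro Z
    have h0 := hfmem Z
    rw [Finset.mem_biUnion] at h0
    obtain ⟨j, hj, hmem⟩ := h0
    obtain ⟨m, hm, hfm⟩ := Finset.mem_image.mp hmem
    rw [← hfm]
    exact ⟨hj, Finset.mem_range.mp hm⟩
  refine ⟨fun Z => if h : Z.Nonempty then (f ⟨Z, h⟩).1 else ⟨0, hn⟩, ?_, ?_, ?_⟩
  case _ =>
    intro Z hZ
    simp only [dif_pos hZ]
    exact hD_sub ⟨Z, hZ⟩ (hf1 ⟨Z, hZ⟩).1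
  case _ =>
    intro t
    simp only [dif_pos (hXne t)]
    have h1 := (hf1 ⟨X t, hXne t⟩).1
    have hc : ∃ t', X t' = (⟨X t, hXne t⟩ : ι).val := ⟨t, rfl⟩
    have hDt : D ⟨X t, hXne t⟩ = {x hc.choose} := dif_pos hc
    rw [hDt, Finset.mem_singleton] at h1
    have ht : hc.choose = t := hXinj hc.choose_spec
    rw [h1, ht]
  case _ =>
    set ψ : Finset (Fin n) → Fin n :=
      fun Z => if h : Z.Nonempty then (f ⟨Z, h⟩).1 else ⟨0, hn⟩ with hψ
    have hψval : ∀ (Z : Finset (Fin n)) (h : Z.Nonempty), ψ Z = (f ⟨Z, h⟩).1 :=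
      fun Z h => dif_pos h
    set F : Fin n → Finset ι := fun i => Finset.univ.filter (fun Z => (f Z).1 = i) with hF
    have hFa : ∀ i, (F i).card ≤ a i := by
      intro i
      have hle := Finset.card_le_card_of_injOn (f := fun Z : ι => (f Z).2)
        (s := F i) (t := Finset.range (a i)) ?_ ?_
      · rwa [Finset.card_range] at hle
      · intro Z hZ
        simp only [Finset.mem_coe, hF, Finset.mem_filter, Finset.mem_univ, true_and] at hZ
        rw [Finset.mem_coe, Finset.mem_range, ← hZ]
        exact (hf1 Z).2
      · intro Z hZ Z' hZ' heq
        simp only [Finset.mem_coe, hF, Finset.mem_filter, Finset.mem_univ, true_and] at hZ hZ'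
        apply hfinj
        exact Prod.ext (hZ.trans hZ'.symm) heq
    have hFtotal : ∑ i, (F i).card = 2 ^ n - 1 := by
      rw [← cardι, ← Finset.card_univ]
      exact (Finset.card_eq_sum_card_fiberwise
        (f := fun Z : ι => (f Z).1) (fun Z _ => Finset.mem_univ _)).symm
    have heqF : ∀ i ∈ Finset.univ, (F i).card = a i :=
      (Finset.sum_eq_sum_iff_of_le (fun i _ => hFa i)).mp (by rw [hFtotal, hsum])
    intro i
    have hsetimg : {Z : Finset (Fin n) | Z.Nonempty ∧ ψ Z = i}
        = ↑((F i).image Subtype.val) := by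
      ext Z
      simp only [Set.mem_setOf_eq, Finset.coe_image, Set.mem_image, Finset.mem_coe,
        hF, Finset.mem_filter, Finset.mem_univ, true_and]
      constructor
      · rintro ⟨hne, hZψ⟩
        refine ⟨⟨Z, hne⟩, ?_, rfl⟩
        rw [← hψval Z hne]
        exact hZψ
      · rintro ⟨W, hW, rfl⟩
        refine ⟨W.2, ?_⟩
        rw [hψval W.val W.2]
        rw [← hW]
    rw [hsetimg, Set.ncard_coe_finset,
      Finset.card_image_of_injective _ Subtype.val_injective]
    exact heqF i (Finset.mem_univ i)

end Stmt5Aux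

/-- Theorem: specifying a section at `ℓ` vertices. If `ε_k(a) ≥ ℓ` for
all `1 ≤ k < n` then for any `ℓ` distinct nonempty vertices `X_t` and choices `x_t ∈ X_t`
there is an upright spanning tree with signature `a` whose section sends each `X_t` to `x_t`. -/
theorem stmt5 (n ℓ : ℕ) (hℓ : 1 ≤ ℓ) (a : Fin n → ℕ) (hsig : IsSignature n a)
    (hex : ∀ k, 1 ≤ k → k < n → (ℓ : ℤ) ≤ excess a k)
    (X : Fin ℓ → Finset (Fin n)) (hXne : ∀ t, (X t).Nonempty)
    (hXinj : Function.Injective X)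
    (x : Fin ℓ → Fin n) (hx : ∀ t, x t ∈ X t) :
    ∃ (T : SimpleGraph (Finset (Fin n))) (ψ : Finset (Fin n) → Fin n),
      IsSpanningTreeOf T (cube n) ∧ IsUpright T ∧ HasSig T a ∧
        IsTreeSection T ψ ∧ ∀ t, ψ (X t) = x t := by
  classical
  rcases Nat.eq_zero_or_pos n with hn | hn
  · exfalso
    obtain ⟨i, -⟩ := hXne ⟨0, hℓ⟩
    have := i.isLt
    omega
  · obtain ⟨T₀, hT₀, hS₀⟩ := hsig
    have hsum := Stmt5Aux.sum_sig hn T₀ hT₀ a hS₀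
    obtain ⟨ψ, hsec, hψX, hcount⟩ :=
      Stmt5Aux.exists_section hn hℓ a hsum hex X hXne hXinj x hx
    refine ⟨Stmt5Aux.secGraph ψ, ψ,
      ⟨Stmt5Aux.secGraph_le_cube ψ, Stmt5Aux.secGraph_isTree hsec⟩,
      Stmt5Aux.secGraph_upright hsec, ?_, ?_, hψX⟩
    · intro i
      rw [Stmt5Aux.dirCount_secGraph hsec i, hcount i]
    · intro Z hZ
      exact ⟨hsec Z hZ, Or.inl ⟨hsec Z hZ, rfl⟩⟩
end

section
/- Let I be an irreducible signature of Q_n, let X be a nonempty vertex of Q_n, and let x ∈ X. Then there exists an upright spanning tree T of Q_n with signature I such that ψ_T(X) = x. -/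
open SimpleGraph

namespace Stmt6Proof
open Finset

variable {n : ℕ}

lemma sd_of_mem {X : Finset (Fin n)} {i : Fin n} (h : i ∈ X) :
    symmDiff X {i} = X.erase i := by
  ext j; simp only [symmDiff, Finset.mem_erase, Finset.sup_eq_union, Finset.mem_union,
    Finset.mem_sdiff, Finset.mem_singleton]
  constructor
  · rintro (⟨hj, hne⟩ | ⟨rfl, hj⟩)
    · exact ⟨hne, hj⟩
    · exact absurd h hj
  · rintro ⟨hne, hj⟩; exact Or.inl ⟨hj, hne⟩

lemma sd_erase {X : Finset (Fin n)} {i : Fin n} (h : i ∈ X) :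
    symmDiff X (X.erase i) = {i} := by
  ext j; simp only [symmDiff, Finset.mem_erase, Finset.sup_eq_union, Finset.mem_union,
    Finset.mem_sdiff, Finset.mem_singleton]
  constructor
  · rintro (⟨hj, hne⟩ | ⟨⟨_, _⟩, _⟩)
    · by_contra hne'; exact hne ⟨hne', hj⟩
    · tauto
  · rintro rfl; exact Or.inl ⟨h, fun hh => hh.1 rfl⟩

lemma sym2_sd {A B C D : Finset (Fin n)} (h : s(A,B) = s(C,D)) :
    symmDiff A B = symmDiff C D := by
  rw [Sym2.eq_iff] at h
  rcases h with ⟨rfl, rfl⟩ | ⟨rfl, rfl⟩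
  · rfl
  · exact symmDiff_comm _ _

lemma endpoints_sd (X : Finset (Fin n)) (i : Fin n) :
    symmDiff X (symmDiff X {i}) = {i} := symmDiff_symmDiff_cancel_left _ _

lemma dir_unique {i j : Fin n} {e : Sym2 (Finset (Fin n))}
    (hi : edgeInDir i e) (hj : edgeInDir j e) : i = j := by
  obtain ⟨U, rfl⟩ := hi
  obtain ⟨V, hV⟩ := hj
  have h := sym2_sd hV
  rw [endpoints_sd, endpoints_sd] at h
  exact Finset.singleton_injective h

lemma adj_dir {U V : Finset (Fin n)} (h : (cube n).Adj U V) :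
    ∃ i, symmDiff U V = {i} ∧ V = symmDiff U {i} := by
  obtain ⟨i, hi⟩ := Finset.card_eq_one.mp h
  refine ⟨i, hi, ?_⟩
  rw [← hi, symmDiff_symmDiff_cancel_left]

lemma sd_triangle (U U' V : Finset (Fin n)) :
    symmDiff U V ⊆ symmDiff U U' ∪ symmDiff U' V := by
  intro j
  simp only [Finset.mem_symmDiff, Finset.mem_union]
  tauto

theorem section_to_tree (ψ : Finset (Fin n) → Fin n)
    (hψ : ∀ Y : Finset (Fin n), Y.Nonempty → ψ Y ∈ Y) :
    ∃ T : SimpleGraph (Finset (Fin n)),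
      IsSpanningTreeOf T (cube n) ∧ IsUpright T ∧ IsTreeSection T ψ ∧
        ∀ i, dirCount T i = {Y : Finset (Fin n) | Y.Nonempty ∧ ψ Y = i}.ncard := by
  classical
  set par : Finset (Fin n) → Finset (Fin n) := fun Y => Y.erase (ψ Y) with hpar
  set E : Set (Sym2 (Finset (Fin n))) :=
    {e | ∃ Y : Finset (Fin n), Y.Nonempty ∧ e = s(Y, par Y)} with hEdef
  set T := SimpleGraph.fromEdgeSet E with hTdef
  have hadj : ∀ {Z W : Finset (Fin n)},
      T.Adj Z W ↔ (∃ Y, Y.Nonempty ∧ s(Z,W) = s(Y, par Y)) ∧ Z ≠ W := by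
    intro Z W
    rw [hTdef, SimpleGraph.fromEdgeSet_adj]
    rfl
  have hparm : ∀ {Y : Finset (Fin n)}, Y.Nonempty → (par Y).card + 1 = Y.card :=
    fun hY => Finset.card_erase_add_one (hψ _ hY)
  have hpar_ne : ∀ {Y : Finset (Fin n)}, Y.Nonempty → Y ≠ par Y := by
    intro Y hY h
    have h1 := hparm hY
    rw [← h] at h1
    omega
  have hadj_par : ∀ {Y : Finset (Fin n)}, Y.Nonempty → T.Adj Y (par Y) := by
    intro Y hY
    rw [hadj]
    exact ⟨⟨Y, hY, rfl⟩, hpar_ne hY⟩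
  have hle : T ≤ cube n := by
    intro Z W h
    rw [hadj] at h
    obtain ⟨⟨Y, hY, hZW⟩, hne⟩ := h
    have hsd := sym2_sd hZW
    show (symmDiff Z W).card = 1
    rw [hsd, sd_erase (hψ _ hY)]
    exact Finset.card_singleton _
  have hreach' : ∀ m (Y : Finset (Fin n)), Y.card ≤ m → T.Reachable Y ∅ := by
    intro m
    induction m with
    | zero =>
      intro Y hY
      rw [Nat.le_zero, Finset.card_eq_zero] at hY
      subst hY
      exact Reachable.refl _
    | succ m ih =>
      intro Y hY
      rcases Y.eq_empty_or_nonempty with rfl | hne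
      · exact Reachable.refl _
      · refine (hadj_par hne).reachable.trans (ih _ ?_)
        have := hparm hne
        omega
  have hreach : ∀ Y : Finset (Fin n), T.Reachable Y ∅ := fun Y => hreach' _ Y le_rfl
  have hconn : T.Connected := by
    have hne : Nonempty (Finset (Fin n)) := ⟨∅⟩
    exact SimpleGraph.Connected.mk (fun u v => (hreach u).trans (hreach v).symm)
  have hwalk_lb : ∀ {U V : Finset (Fin n)} (w : T.Walk U V), (symmDiff U V).card ≤ w.length := by
    intro U V w
    induction w with
    | nil => simp [symmDiff_self, Finset.bot_eq_empty]
    | @cons U U' V h p ih =>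
      have h1 : (symmDiff U U').card = 1 := hle h
      have h2 : (symmDiff U V).card ≤ (symmDiff U U' ∪ symmDiff U' V).card :=
        Finset.card_le_card (sd_triangle U U' V)
      have h3 : (symmDiff U U' ∪ symmDiff U' V).card ≤
          (symmDiff U U').card + (symmDiff U' V).card := Finset.card_union_le _ _
      rw [SimpleGraph.Walk.length_cons]
      omega
  have hupr : IsUpright T := by
    intro Z
    refine le_antisymm ?_ ?_
    · have hub : ∀ m (Y : Finset (Fin n)), Y.card ≤ m → T.dist Y ∅ ≤ Y.card := by
        intro m
        induction m with
        | zero =>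
          intro Y hY
          rw [Nat.le_zero, Finset.card_eq_zero] at hY
          subst hY
          simp
        | succ m ih =>
          intro Y hY
          rcases Y.eq_empty_or_nonempty with rfl | hne
          · simp
          · have hd1 : T.dist Y (par Y) ≤ 1 := by
              have := SimpleGraph.dist_le (SimpleGraph.Walk.cons (hadj_par hne) SimpleGraph.Walk.nil)
              simpa using this
            have htri := hconn.dist_triangle (u := Y) (v := par Y) (w := ∅)
            have hih := ih (par Y) (by have := hparm hne; omega)
            have := hparm hne
            omega
      exact hub _ Z le_rfl
    · obtain ⟨w, hw⟩ := hconn.exists_walk_length_eq_dist Z ∅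
      have h1 := hwalk_lb w
      have h2 : symmDiff Z ∅ = Z := by
        rw [← Finset.bot_eq_empty, symmDiff_bot]
      rw [h2] at h1
      omega
  have hEeq : T.edgeSet = E := by
    rw [hTdef, SimpleGraph.edgeSet_fromEdgeSet]
    ext e
    simp only [Set.mem_diff, Set.mem_setOf_eq, and_iff_left_iff_imp]
    rintro ⟨Y, hY, rfl⟩
    exact fun hd => hpar_ne hY (by simpa using hd)
  have hacyc : T.IsAcyclic := by
    rw [SimpleGraph.isAcyclic_iff_forall_adj_isBridge]
    intro v w hvw
    obtain ⟨⟨Y, hY, hsvw⟩, hne⟩ := hadj.mp hvw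
    rw [SimpleGraph.isBridge_iff]
    set A : Set (Finset (Fin n)) := {Z | ∃ k, par^[k] Z = Y} with hAdef
    have hcard_it : ∀ k (Z : Finset (Fin n)), (par^[k] Z).card ≤ Z.card := by
      intro k
      induction k with
      | zero => simp
      | succ k ih =>
        intro Z
        rw [Function.iterate_succ_apply]
        exact le_trans (ih (par Z)) (Finset.card_erase_le)
    have hYA : Y ∈ A := ⟨0, rfl⟩
    have hparYA : par Y ∉ A := by
      rintro ⟨k, hk⟩
      have h1 := hcard_it k (par Y)
      rw [hk] at h1
      have h2 := hparm hY
      have h3 : 0 < Y.card := Finset.card_pos.mpr hY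
      omega
    have hcross : ∀ {Z W : Finset (Fin n)},
        T.Adj Z W → s(Z, W) ≠ s(Y, par Y) → (Z ∈ A ↔ W ∈ A) := by
      intro Z W hZW hneq
      obtain ⟨⟨Y', hY', hZW'⟩, _⟩ := hadj.mp hZW
      have key : Y' ∈ A ↔ par Y' ∈ A := by
        constructor
        · rintro ⟨k, hk⟩
          cases k with
          | zero =>
            exfalso
            apply hneq
            rw [hZW']
            have : Y' = Y := hk
            rw [this]
          | succ k =>
            exact ⟨k, by rw [← Function.iterate_succ_apply]; exact hk⟩
        · rintro ⟨k, hk⟩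
          exact ⟨k+1, by rw [Function.iterate_succ_apply]; exact hk⟩
      rcases Sym2.eq_iff.mp hZW' with ⟨rfl, rfl⟩ | ⟨rfl, rfl⟩
      · exact key
      · exact key.symm
    rintro ⟨p⟩
    have hmemA : ∀ {u u' : Finset (Fin n)} (q : (T \ SimpleGraph.fromEdgeSet {s(v,w)}).Walk u u'),
        u ∈ A → u' ∈ A := by
      intro u u' q
      induction q with
      | nil => exact id
      | @cons u u₁ u' h q ih =>
        intro hu
        apply ih
        have h1 : T.Adj u u₁ := ((SimpleGraph.sdiff_adj _ _ _ _).mp h).1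
        have h2 : s(u, u₁) ≠ s(v, w) := by
          intro hh
          refine ((SimpleGraph.sdiff_adj _ _ _ _).mp h).2 ?_
          rw [SimpleGraph.fromEdgeSet_adj]
          exact ⟨by rw [hh]; exact Set.mem_singleton _, h1.ne⟩
        rw [hsvw] at h2
        exact (hcross h1 h2).mp hu
    rcases Sym2.eq_iff.mp hsvw with ⟨rfl, rfl⟩ | ⟨rfl, rfl⟩
    · exact hparYA (hmemA p hYA)
    · exact hparYA (hmemA p.reverse hYA)
  have htree : T.IsTree := ⟨hconn, hacyc⟩
  have hdir : ∀ i, dirCount T i = {Y : Finset (Fin n) | Y.Nonempty ∧ ψ Y = i}.ncard := by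
    intro i
    have hset : {e | e ∈ T.edgeSet ∧ edgeInDir i e} =
        (fun Y => s(Y, par Y)) '' {Y | Y.Nonempty ∧ ψ Y = i} := by
      ext e
      simp only [Set.mem_setOf_eq, Set.mem_image, hEeq]
      constructor
      · rintro ⟨⟨Y, hY, rfl⟩, hd⟩
        refine ⟨Y, ⟨hY, ?_⟩, rfl⟩
        have hd' : edgeInDir (ψ Y) s(Y, par Y) :=
          ⟨Y, by rw [sd_of_mem (hψ _ hY)]⟩
        exact (dir_unique hd hd').symm
      · rintro ⟨Y, ⟨hY, rfl⟩, rfl⟩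
        exact ⟨⟨Y, hY, rfl⟩, ⟨Y, by rw [sd_of_mem (hψ _ hY)]⟩⟩
    rw [dirCount, hset, Set.ncard_image_of_injOn]
    intro Y hY Z hZ h
    rcases Sym2.eq_iff.mp h with ⟨h1, _⟩ | ⟨h1, h2⟩
    · exact h1
    · exfalso
      have c1 := hparm hY.1
      have c2 := hparm hZ.1
      rw [← h1] at c2
      rw [h2] at c1
      omega
  exact ⟨T, ⟨hle, htree⟩, hupr, fun Y hY => ⟨hψ Y hY, hadj_par hY⟩, hdir⟩


lemma edge_has_dir {T : SimpleGraph (Finset (Fin n))} (hle : T ≤ cube n)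
    {e : Sym2 (Finset (Fin n))} (he : e ∈ T.edgeSet) : ∃ i, edgeInDir i e := by
  induction e using Sym2.ind with
  | _ U V =>
    rw [SimpleGraph.mem_edgeSet] at he
    obtain ⟨i, _, hV⟩ := adj_dir (hle he)
    exact ⟨i, U, by rw [← hV]⟩

lemma inter_eq_of_not_mem {U V : Finset (Fin n)} {i : Fin n} {R : Finset (Fin n)}
    (hsd : symmDiff U V = {i}) (hi : i ∉ R) : U ∩ R = V ∩ R := by
  ext j
  simp only [Finset.mem_inter, and_congr_left_iff]
  intro hj
  have hji : j ≠ i := fun h => hi (h ▸ hj)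
  have : j ∉ symmDiff U V := by rw [hsd]; simpa using hji
  rw [Finset.mem_symmDiff] at this
  tauto

section WithTree

variable {T : SimpleGraph (Finset (Fin n))}

/-- The number of edges of `T` in direction `i`, as a finset card. -/
lemma dirCount_eq_filter [DecidablePred fun e : Sym2 (Finset (Fin n)) => e ∈ T.edgeSet]
    [∀ i : Fin n, DecidablePred (edgeInDir (n := n) i)] (i : Fin n) :
    dirCount T i =
      (((Set.toFinite T.edgeSet).toFinset).filter (fun e => edgeInDir i e)).card := by
  rw [dirCount, ← Set.ncard_coe_finset]
  congr 1
  ext e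
  constructor
  · rintro ⟨h1, h2⟩
    exact Finset.mem_coe.mpr (Finset.mem_filter.mpr ⟨(Set.Finite.mem_toFinset _).mpr h1, h2⟩)
  · intro h
    obtain ⟨h1, h2⟩ := Finset.mem_filter.mp (Finset.mem_coe.mp h)
    exact ⟨(Set.Finite.mem_toFinset _).mp h1, h2⟩

lemma sum_dirCount (hT : IsSpanningTreeOf T (cube n)) :
    ∑ i, dirCount T i = 2 ^ n - 1 := by
  classical
  rcases Nat.eq_zero_or_pos n with rfl | hn
  · have h0 : T.edgeSet = ∅ := by
      ext e
      simp only [Set.mem_empty_iff_false, iff_false]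
      intro he
      obtain ⟨i, -⟩ := edge_has_dir hT.1 he
      exact absurd i.pos (by omega)
    simp [dirCount, h0]
  obtain ⟨hle, htree⟩ := hT
  set ET : Finset (Sym2 (Finset (Fin n))) := (Set.toFinite T.edgeSet).toFinset with hETdef
  have hET : ∀ e, e ∈ ET ↔ e ∈ T.edgeSet := fun e => Set.Finite.mem_toFinset _
  set d : Sym2 (Finset (Fin n)) → Fin n :=
    fun e => if h : ∃ i, edgeInDir i e then h.choose else ⟨0, hn⟩ with hddef
  have hd : ∀ e ∈ ET, ∀ i, (edgeInDir i e ↔ d e = i) := by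
    intro e he i
    have hex : ∃ i, edgeInDir i e := edge_has_dir hle ((hET e).mp he)
    constructor
    · intro hi
      simp only [hddef, dif_pos hex]
      exact dir_unique hex.choose_spec hi
    · intro hi
      rw [← hi]
      simp only [hddef, dif_pos hex]
      exact hex.choose_spec
  have hfib : ∀ i, dirCount T i = (ET.filter (fun e => d e = i)).card := by
    intro i
    rw [dirCount_eq_filter]
    congr 1
    apply Finset.filter_congr
    intro e he
    exact hd e he i
  have hcard : ET.card = ∑ i, (ET.filter (fun e => d e = i)).card :=
    Finset.card_eq_sum_card_fiberwise (fun e _ => Finset.mem_univ _)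
  have hedge : ET.card = 2 ^ n - 1 := by
    letI : Fintype T.edgeSet := (Set.toFinite _).fintype
    have h1 := htree.card_edgeFinset
    rw [Fintype.card_finset, Fintype.card_fin] at h1
    have h2 : ET = T.edgeFinset := by
      ext e; rw [hET e, SimpleGraph.mem_edgeFinset]
    rw [h2]
    omega
  calc ∑ i, dirCount T i = ∑ i, (ET.filter (fun e => d e = i)).card := by simp_rw [hfib]
    _ = ET.card := hcard.symm
    _ = 2 ^ n - 1 := hedge

lemma sig_hall (hT : IsSpanningTreeOf T (cube n)) (R : Finset (Fin n)) :
    2 ^ R.card - 1 ≤ ∑ i ∈ R, dirCount T i := by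
  classical
  obtain ⟨hle, htree⟩ := hT
  rcases R.eq_empty_or_nonempty with rfl | hR
  · simp
  obtain ⟨i₀, hi₀⟩ := hR
  set V' := ↥{W : Finset (Fin n) | W ⊆ R} with hV'def
  set P := projTree n R T with hPdef
  have hproj_mem : ∀ U : Finset (Fin n), U ∩ R ∈ {W : Finset (Fin n) | W ⊆ R} :=
    fun U => Finset.inter_subset_right
  have hPreach : ∀ {U V : Finset (Fin n)} (_ : T.Walk U V),
      P.Reachable ⟨U ∩ R, hproj_mem U⟩ ⟨V ∩ R, hproj_mem V⟩ := by
    intro U V w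
    induction w with
    | nil => exact Reachable.refl _
    | @cons U U' V h p ih =>
      by_cases heq : U ∩ R = U' ∩ R
      · have : (⟨U ∩ R, hproj_mem U⟩ : V') = ⟨U' ∩ R, hproj_mem U'⟩ := Subtype.ext heq
        rw [this]
        exact ih
      · have hadj : P.Adj ⟨U ∩ R, hproj_mem U⟩ ⟨U' ∩ R, hproj_mem U'⟩ := ⟨heq, U, U', h, rfl, rfl⟩
        exact hadj.reachable.trans ih
  have hPconn : P.Connected := by
    have hne : Nonempty V' := ⟨⟨∅, by simp⟩⟩
    refine SimpleGraph.Connected.mk (fun A B => ?_)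
    have hA : A.1 ∩ R = A.1 := Finset.inter_eq_left.mpr A.2
    have hB : B.1 ∩ R = B.1 := Finset.inter_eq_left.mpr B.2
    have h1 : (⟨A.1 ∩ R, hproj_mem A.1⟩ : V') = A := Subtype.ext hA
    have h2 : (⟨B.1 ∩ R, hproj_mem B.1⟩ : V') = B := Subtype.ext hB
    rw [← h1, ← h2]
    exact hPreach (htree.isConnected.preconnected A.1 B.1).some
  set r : V' := ⟨∅, by simp⟩ with hrdef
  have hstep : ∀ A : V', A.1.Nonempty → ∃ B : V', (P.dist B r + 1 = P.dist A r) ∧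
      ∃ U V : Finset (Fin n), T.Adj U V ∧ U ∩ R = A.1 ∧ V ∩ R = B.1 := by
    intro A hA
    have hner : A ≠ r := by
      intro h
      rw [h] at hA
      exact Finset.not_nonempty_empty hA
    have hdpos : P.dist A r ≠ 0 := (hPconn.pos_dist_of_ne hner).ne'
    obtain ⟨p, hp⟩ := hPconn.exists_walk_length_eq_dist A r
    cases p with
    | nil =>
      rw [SimpleGraph.Walk.length_nil] at hp
      omega
    | @cons _ B _ h q =>
      obtain ⟨hne', U, V, hUV, hU, hV⟩ := h
      refine ⟨B, ?_, U, V, hUV, hU, hV⟩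
      have h1 : P.dist B r ≤ q.length := SimpleGraph.dist_le q
      have h2 : P.dist A r ≤ P.dist A B + P.dist B r := hPconn.dist_triangle
      have h3 : P.dist A B ≤ 1 := by
        have hadjAB : P.Adj A B := ⟨hne', U, V, hUV, hU, hV⟩
        have := SimpleGraph.dist_le (SimpleGraph.Walk.cons hadjAB SimpleGraph.Walk.nil)
        simpa using this
      replace hp : q.length + 1 = P.dist A r := hp
      omega
  choose B hB U V hUV hU hV using hstep
  -- the injection from nonempty subsets of R into edges of T in directions in R
  set ET : Finset (Sym2 (Finset (Fin n))) := (Set.toFinite T.edgeSet).toFinset with hETdef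
  have hET : ∀ e, e ∈ ET ↔ e ∈ T.edgeSet := fun e => Set.Finite.mem_toFinset _
  set t : Finset (Sym2 (Finset (Fin n))) :=
    ET.filter (fun e => ∃ i ∈ R, edgeInDir i e) with htdef
  set g : Finset (Fin n) → Sym2 (Finset (Fin n)) :=
    fun A => if h : A ⊆ R ∧ A.Nonempty then
      s(U ⟨A, h.1⟩ h.2, V ⟨A, h.1⟩ h.2) else s(∅, ∅) with hgdef
  have hgmem : ∀ A ∈ R.powerset.erase ∅, g A ∈ t := by
    intro A hA
    rw [Finset.mem_erase, Finset.mem_powerset] at hA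
    have hcond : A ⊆ R ∧ A.Nonempty := ⟨hA.2, Finset.nonempty_iff_ne_empty.mpr hA.1⟩
    set A' : V' := ⟨A, hcond.1⟩ with hA'def
    have hg : g A = s(U A' hcond.2, V A' hcond.2) := dif_pos hcond
    rw [htdef, Finset.mem_filter, hg]
    have hadj := hUV A' hcond.2
    refine ⟨(hET _).mpr ((T.mem_edgeSet).mpr hadj), ?_⟩
    obtain ⟨i, hsd, hVd⟩ := adj_dir (hle hadj)
    refine ⟨i, ?_, ⟨U A' hcond.2, by rw [← hVd]⟩⟩
    by_contra hiR
    have heq := inter_eq_of_not_mem hsd hiR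
    rw [hU A' hcond.2, hV A' hcond.2] at heq
    have hBA : B A' hcond.2 = A' := Subtype.ext heq.symm
    have := hB A' hcond.2
    rw [hBA] at this
    omega
  have hginj : ∀ A ∈ R.powerset.erase ∅, ∀ A₂ ∈ R.powerset.erase ∅, g A = g A₂ → A = A₂ := by
    intro A hA A₂ hA₂ hg
    rw [Finset.mem_erase, Finset.mem_powerset] at hA hA₂
    have hc : A ⊆ R ∧ A.Nonempty := ⟨hA.2, Finset.nonempty_iff_ne_empty.mpr hA.1⟩
    have hc₂ : A₂ ⊆ R ∧ A₂.Nonempty := ⟨hA₂.2, Finset.nonempty_iff_ne_empty.mpr hA₂.1⟩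
    set A' : V' := ⟨A, hc.1⟩
    set A₂' : V' := ⟨A₂, hc₂.1⟩
    rw [hgdef] at hg
    simp only [dif_pos hc, dif_pos hc₂] at hg
    rcases Sym2.eq_iff.mp hg with ⟨h1, h2⟩ | ⟨h1, h2⟩
    · have := hU A' hc.2
      rw [h1, hU A₂' hc₂.2] at this
      exact this.symm
    · exfalso
      have e1 : B A₂' hc₂.2 = A' := by
        apply Subtype.ext
        rw [← hV A₂' hc₂.2, ← h1]
        exact hU A' hc.2
      have e2 : B A' hc.2 = A₂' := by
        apply Subtype.ext
        rw [← hV A' hc.2, h2]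
        exact hU A₂' hc₂.2
      have d1 := hB A' hc.2
      have d2 := hB A₂' hc₂.2
      rw [e2] at d1
      rw [e1] at d2
      omega
  have hcard1 : (R.powerset.erase ∅).card ≤ t.card :=
    Finset.card_le_card_of_injOn g hgmem hginj
  have hcard2 : (R.powerset.erase ∅).card = 2 ^ R.card - 1 := by
    rw [Finset.card_erase_of_mem (Finset.empty_mem_powerset R), Finset.card_powerset]
  -- now t.card ≤ ∑ i ∈ R, dirCount T i
  set d : Sym2 (Finset (Fin n)) → Fin n :=
    fun e => if h : ∃ i, edgeInDir i e then h.choose else i₀ with hddef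
  have hd : ∀ e ∈ ET, ∀ i, (edgeInDir i e ↔ d e = i) := by
    intro e he i
    have hex : ∃ i, edgeInDir i e := edge_has_dir hle ((hET e).mp he)
    constructor
    · intro hi
      simp only [hddef, dif_pos hex]
      exact dir_unique hex.choose_spec hi
    · intro hi
      rw [← hi]
      simp only [hddef, dif_pos hex]
      exact hex.choose_spec
  have hdR : ∀ e ∈ t, d e ∈ R := by
    intro e he
    rw [htdef, Finset.mem_filter] at he
    obtain ⟨he1, i, hiR, hi⟩ := he
    rw [(hd e he1 i).mp hi]
    exact hiR
  have hcard3 : t.card = ∑ i ∈ R, (t.filter (fun e => d e = i)).card :=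
    Finset.card_eq_sum_card_fiberwise hdR
  have hcard4 : ∀ i ∈ R, (t.filter (fun e => d e = i)).card ≤ dirCount T i := by
    intro i hiR
    rw [dirCount_eq_filter (i := i)]
    apply Finset.card_le_card
    intro e he
    rw [htdef] at he
    simp only [Finset.mem_filter] at he ⊢
    obtain ⟨⟨he1, -⟩, hde⟩ := he
    exact ⟨he1, (hd e he1 i).mpr hde⟩
  have : t.card ≤ ∑ i ∈ R, dirCount T i := by
    rw [hcard3]
    exact Finset.sum_le_sum hcard4
  omega

end WithTree


theorem exists_section (a : Fin n → ℕ)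
    (hhall : ∀ R : Finset (Fin n), 2 ^ R.card - 1 ≤ ∑ i ∈ R, a i)
    (htot : ∑ i, a i = 2 ^ n - 1)
    (hirr : IsIrreducibleSig a)
    (X : Finset (Fin n)) (hX : X.Nonempty) (x : Fin n) (hx : x ∈ X) :
    ∃ ψ : Finset (Fin n) → Fin n, (∀ Y, Y.Nonempty → ψ Y ∈ Y) ∧ ψ X = x ∧
      ∀ i, {Y : Finset (Fin n) | Y.Nonempty ∧ ψ Y = i}.ncard = a i := by
  classical
  have hax : 1 ≤ a x := by
    have := hhall {x}
    simpa using this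
  set a' : Fin n → ℕ := fun i => a i - (if i = x then 1 else 0) with ha'def
  have ha'x : a' x + 1 = a x := by
    have h1 : a' x = a x - 1 := by rw [ha'def]; simp
    omega
  have ha'ne : ∀ i, i ≠ x → a' i = a i := by
    intro i hi
    simp [ha'def, hi]
  have hsum' : ∀ R : Finset (Fin n), x ∈ R → (∑ i ∈ R, a' i) + 1 = ∑ i ∈ R, a i := by
    intro R hxR
    rw [← Finset.add_sum_erase R a' hxR, ← Finset.add_sum_erase R a hxR]
    have heq : ∑ i ∈ R.erase x, a' i = ∑ i ∈ R.erase x, a i :=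
      Finset.sum_congr rfl fun i hi => ha'ne i (Finset.mem_erase.mp hi).1
    omega
  have hsum'' : ∀ R : Finset (Fin n), x ∉ R → ∑ i ∈ R, a' i = ∑ i ∈ R, a i := by
    intro R hxR
    exact Finset.sum_congr rfl fun i hi => ha'ne i (fun h => hxR (h ▸ hi))
  set tfun : {Y : Finset (Fin n) // Y.Nonempty ∧ Y ≠ X} → Finset (Fin n × ℕ) :=
    fun Y => Y.1.biUnion (fun i => (Finset.range (a' i)).image (fun j => (i, j))) with htfun
  have hHall : ∀ s : Finset {Y : Finset (Fin n) // Y.Nonempty ∧ Y ≠ X},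
      s.card ≤ (s.biUnion tfun).card := by
    intro s
    set R : Finset (Fin n) := s.biUnion (fun Y => Y.1) with hRdef
    have h1 : s.biUnion tfun = R.biUnion (fun i => (Finset.range (a' i)).image (fun j => (i, j))) := by
      ext p
      simp only [htfun, hRdef, Finset.mem_biUnion, Finset.mem_image, Finset.mem_range]
      tauto
    have hcardB : (R.biUnion (fun i => (Finset.range (a' i)).image (fun j => (i, j)))).card
        = ∑ i ∈ R, a' i := by
      rw [Finset.card_biUnion]
      · refine Finset.sum_congr rfl fun i _ => ?_
        rw [Finset.card_image_of_injective _ (fun j k h => (Prod.mk.injEq _ _ _ _ ▸ h).2),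
          Finset.card_range]
      · intro i _ j _ hne
        simp only [Finset.disjoint_left, Finset.mem_image, Finset.mem_range]
        rintro p ⟨k, -, rfl⟩ ⟨l, -, hl⟩
        exact hne ((Prod.mk.injEq _ _ _ _ ▸ hl.symm).1)
    have hcards : s.card ≤ ((R.powerset.erase ∅).erase X).card := by
      apply Finset.card_le_card_of_injOn (fun Y => Y.1)
      · intro Y hY
        rw [Finset.mem_coe, Finset.mem_erase, Finset.mem_erase, Finset.mem_powerset]
        exact ⟨Y.2.2, Finset.nonempty_iff_ne_empty.mp Y.2.1,
          fun i hi => Finset.mem_biUnion.mpr ⟨Y, hY, hi⟩⟩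
      · intro Y _ Z _ h
        exact Subtype.ext h
    rw [h1, hcardB]
    by_cases hRuniv : R = Finset.univ
    · rw [hRuniv] at hcards ⊢
      have hxR : x ∈ (Finset.univ : Finset (Fin n)) := Finset.mem_univ x
      have e1 := hsum' Finset.univ hxR
      rw [htot] at e1
      have htarget : (((Finset.univ : Finset (Fin n)).powerset.erase ∅).erase X).card
          = 2 ^ n - 2 := by
        rw [Finset.card_erase_of_mem (Finset.mem_erase.mpr
            ⟨Finset.nonempty_iff_ne_empty.mp hX, Finset.mem_powerset.mpr (Finset.subset_univ X)⟩),
          Finset.card_erase_of_mem (Finset.empty_mem_powerset _), Finset.card_powerset,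
          Finset.card_univ, Fintype.card_fin]
        have : (1:ℕ) ≤ 2 ^ n := Nat.one_le_two_pow
        omega
      omega
    · have htarget : ((R.powerset.erase ∅).erase X).card ≤ 2 ^ R.card - 1 := by
        calc ((R.powerset.erase ∅).erase X).card ≤ (R.powerset.erase ∅).card :=
              Finset.card_le_card (Finset.erase_subset _ _)
          _ = 2 ^ R.card - 1 := by
              rw [Finset.card_erase_of_mem (Finset.empty_mem_powerset _), Finset.card_powerset]
      by_cases hxR : x ∈ R
      · have hRne : R.Nonempty := ⟨x, hxR⟩
        have hstrict : 2 ^ R.card - 1 ≠ ∑ i ∈ R, a i := by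
          intro h
          exact hirr ⟨R, hRne, hRuniv, h.symm⟩
        have e1 := hsum' R hxR
        have hh := hhall R
        have hP1 : (1:ℕ) ≤ 2 ^ R.card := Nat.one_le_two_pow
        omega
      · have e1 := hsum'' R hxR
        have hh := hhall R
        omega
  obtain ⟨f, hfinj, hf⟩ := (Finset.all_card_le_biUnion_card_iff_exists_injective tfun).mp hHall
  have hf1 : ∀ Y : {Y : Finset (Fin n) // Y.Nonempty ∧ Y ≠ X},
      (f Y).1 ∈ Y.1 ∧ (f Y).2 < a' (f Y).1 := by
    intro Y
    have hfY := hf Y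
    simp only [htfun, Finset.mem_biUnion, Finset.mem_image, Finset.mem_range] at hfY
    obtain ⟨i, hi, j, hj, hji⟩ := hfY
    rw [← hji]
    exact ⟨hi, hj⟩
  set ψ : Finset (Fin n) → Fin n :=
    fun Y => if h : Y.Nonempty ∧ Y ≠ X then (f ⟨Y, h⟩).1 else x with hψdef
  have hψX : ψ X = x := by
    rw [hψdef]
    simp
  have hψval : ∀ (Y : Finset (Fin n)) (h : Y.Nonempty ∧ Y ≠ X), ψ Y = (f ⟨Y, h⟩).1 := by
    intro Y h
    rw [hψdef]
    simp only [dif_pos h]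
  have hψmem : ∀ Y, Y.Nonempty → ψ Y ∈ Y := by
    intro Y hY
    by_cases h : Y.Nonempty ∧ Y ≠ X
    · rw [hψval Y h]
      exact (hf1 ⟨Y, h⟩).1
    · have hYX : Y = X := by tauto
      subst hYX
      rw [hψX]
      exact hx
  set C : Fin n → Finset (Finset (Fin n)) :=
    fun i => Finset.univ.filter (fun Y => Y.Nonempty ∧ Y ≠ X ∧ ψ Y = i) with hCdef
  set S : Fin n → Finset (Finset (Fin n)) :=
    fun i => Finset.univ.filter (fun Y => Y.Nonempty ∧ ψ Y = i) with hSdef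
  have hSC : ∀ i, (S i).card = (C i).card + (if i = x then 1 else 0) := by
    intro i
    by_cases hix : i = x
    · have hXS : X ∈ S i := by
        simp only [hSdef, Finset.mem_filter]
        exact ⟨Finset.mem_univ _, hX, by rw [hψX, hix]⟩
      have hxe : (S i).erase X = C i := by
        ext Y
        simp only [hSdef, hCdef, Finset.mem_erase, Finset.mem_filter, Finset.mem_univ, true_and]
        tauto
      rw [if_pos hix, ← Finset.card_erase_add_one hXS, hxe]
    · have hxe : S i = C i := by
        ext Y
        simp only [hSdef, hCdef, Finset.mem_filter, Finset.mem_univ, true_and]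
        constructor
        · rintro ⟨h1, h2⟩
          refine ⟨h1, ?_, h2⟩
          intro hYX
          subst hYX
          rw [hψX] at h2
          exact hix h2.symm
        · tauto
      rw [hxe, if_neg hix, add_zero]
  have hCle : ∀ i, (C i).card ≤ a' i := by
    intro i
    have := Finset.card_le_card_of_injOn
      (f := fun Y : Finset (Fin n) => if h : Y.Nonempty ∧ Y ≠ X then (f ⟨Y, h⟩).2 else 0)
      (s := C i) (t := Finset.range (a' i)) ?_ ?_
    · simpa using this
    · intro Y hY
      simp only [hCdef, Finset.mem_coe, Finset.mem_filter, Finset.mem_univ, true_and] at hY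
      obtain ⟨h1, h2, h3⟩ := hY
      have hcond : Y.Nonempty ∧ Y ≠ X := ⟨h1, h2⟩
      rw [Finset.mem_coe, Finset.mem_range]
      simp only [dif_pos hcond]
      have := (hf1 ⟨Y, hcond⟩).2
      rw [← hψval Y hcond, h3] at this
      exact this
    · intro Y hY Z hZ h
      simp only [hCdef, Finset.coe_filter, Set.mem_setOf_eq, Finset.mem_univ, true_and] at hY hZ
      obtain ⟨hY1, hY2, hY3⟩ := hY
      obtain ⟨hZ1, hZ2, hZ3⟩ := hZ
      have hcY : Y.Nonempty ∧ Y ≠ X := ⟨hY1, hY2⟩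
      have hcZ : Z.Nonempty ∧ Z ≠ X := ⟨hZ1, hZ2⟩
      simp only [dif_pos hcY, dif_pos hcZ] at h
      have hfst : (f ⟨Y, hcY⟩).1 = (f ⟨Z, hcZ⟩).1 := by
        rw [← hψval Y hcY, ← hψval Z hcZ, hY3, hZ3]
      have : f ⟨Y, hcY⟩ = f ⟨Z, hcZ⟩ := Prod.ext hfst h
      have := hfinj this
      exact congrArg Subtype.val this
  have hsumC : ∑ i, (C i).card = 2 ^ n - 2 := by
    have hpart := Finset.card_eq_sum_card_fiberwise
      (s := Finset.univ.filter (fun Y : Finset (Fin n) => Y.Nonempty ∧ Y ≠ X))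
      (t := Finset.univ) (f := ψ) (fun Y _ => Finset.mem_univ _)
    have hfib : ∀ i, (Finset.univ.filter
        (fun Y : Finset (Fin n) => Y.Nonempty ∧ Y ≠ X)).filter (fun Y => ψ Y = i) = C i := by
      intro i
      rw [Finset.filter_filter]
      simp only [hCdef, and_assoc]
    have hcardfil : (Finset.univ.filter
        (fun Y : Finset (Fin n) => Y.Nonempty ∧ Y ≠ X)).card = 2 ^ n - 2 := by
      have heq : Finset.univ.filter (fun Y : Finset (Fin n) => Y.Nonempty ∧ Y ≠ X)
          = ((Finset.univ : Finset (Finset (Fin n))).erase ∅).erase X := by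
        ext Y
        simp only [Finset.mem_filter, Finset.mem_univ, true_and, Finset.mem_erase,
          Finset.nonempty_iff_ne_empty]
        tauto
      rw [heq, Finset.card_erase_of_mem (Finset.mem_erase.mpr
          ⟨Finset.nonempty_iff_ne_empty.mp hX, Finset.mem_univ _⟩),
        Finset.card_erase_of_mem (Finset.mem_univ _), Finset.card_univ, Fintype.card_finset,
        Fintype.card_fin]
      have : (1:ℕ) ≤ 2 ^ n := Nat.one_le_two_pow
      omega
    calc ∑ i, (C i).card
        = ∑ i, ((Finset.univ.filter (fun Y : Finset (Fin n) => Y.Nonempty ∧ Y ≠ X)).filter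
            (fun Y => ψ Y = i)).card := by
          refine Finset.sum_congr rfl fun i _ => ?_
          rw [hfib]
      _ = 2 ^ n - 2 := by rw [← hpart, hcardfil]
  have hsuma' : ∑ i, a' i = 2 ^ n - 2 := by
    have e1 := hsum' Finset.univ (Finset.mem_univ x)
    rw [htot] at e1
    have : (1:ℕ) ≤ 2 ^ n := Nat.one_le_two_pow
    omega
  have hCeq : ∀ i, (C i).card = a' i := by
    by_contra hne
    push_neg at hne
    obtain ⟨i₁, hi₁⟩ := hne
    have hlt : (C i₁).card < a' i₁ := lt_of_le_of_ne (hCle i₁) hi₁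
    have := Finset.sum_lt_sum (fun i _ => hCle i) ⟨i₁, Finset.mem_univ _, hlt⟩
    rw [hsumC, hsuma'] at this
    exact lt_irrefl _ this
  refine ⟨ψ, hψmem, hψX, ?_⟩
  intro i
  have hset : {Y : Finset (Fin n) | Y.Nonempty ∧ ψ Y = i} = ↑(S i) := by
    ext Y
    simp [hSdef]
  rw [hset, Set.ncard_coe_finset, hSC i, hCeq i]
  by_cases hix : i = x
  · rw [if_pos hix, hix]
    exact ha'x
  · rw [ha'ne i hix, if_neg hix, add_zero]


end Stmt6Proof

/-- Corollary: specifying a section at one vertex, irreducible case.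
For an irreducible signature `a` of `Q_n`, any nonempty `X` and any `x ∈ X`, there is an
upright spanning tree with signature `a` whose section sends `X` to `x`. -/
theorem stmt6 (n : ℕ) (a : Fin n → ℕ) (hsig : IsSignature n a) (hirr : IsIrreducibleSig a)
    (X : Finset (Fin n)) (hX : X.Nonempty) (x : Fin n) (hx : x ∈ X) :
    ∃ (T : SimpleGraph (Finset (Fin n))) (ψ : Finset (Fin n) → Fin n),
      IsSpanningTreeOf T (cube n) ∧ IsUpright T ∧ HasSig T a ∧
        IsTreeSection T ψ ∧ ψ X = x := by
  
  obtain ⟨T₀, hT₀, hsig₀⟩ := hsig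
  have hhall : ∀ R : Finset (Fin n), 2 ^ R.card - 1 ≤ ∑ i ∈ R, a i := by
    intro R
    have h := Stmt6Proof.sig_hall hT₀ R
    rwa [Finset.sum_congr rfl fun i _ => hsig₀ i] at h
  have htot : ∑ i, a i = 2 ^ n - 1 := by
    rw [← Stmt6Proof.sum_dirCount hT₀]
    exact (Finset.sum_congr rfl fun i _ => hsig₀ i).symm
  obtain ⟨ψ, hψmem, hψX, hcount⟩ := Stmt6Proof.exists_section a hhall htot hirr X hX x hx
  obtain ⟨T, hT, hup, hts, hdir⟩ := Stmt6Proof.section_to_tree ψ hψmem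
  exact ⟨T, ψ, hT, hup, fun i => by rw [hdir i, hcount i], hts, hψX⟩
end

section
/- Let n ≥ 4 and let I = (a_1, ..., a_n) be an ordered irreducible signature of Q_n. Suppose that for some i ∈ {2, ..., n−1} we have a_{i+1} − a_i ≤ 1. Then ε_i(I) ≥ 2. -/
open SimpleGraph

/-- A connected graph on a finite vertex type has at least `card V - 1` edges. -/
lemma aux_card_le_edges {V : Type*} [Fintype V] (G : SimpleGraph V) (hG : G.Connected) :
    Fintype.card V ≤ G.edgeSet.ncard + 1 := by
  classical
  obtain ⟨r⟩ := hG.nonempty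
  have key : ∀ w : V, w ≠ r → ∃ u, G.Adj w u ∧ G.dist u r < G.dist w r := by
    intro w hw
    obtain ⟨p, hp⟩ := hG.exists_walk_length_eq_dist w r
    have hd : 0 < G.dist w r := hG.pos_dist_of_ne hw
    cases p with
    | nil => exact absurd rfl hw
    | @cons _ u _ h q =>
        refine ⟨u, h, ?_⟩
        have h2 := G.dist_le q
        simp [SimpleGraph.Walk.length_cons] at hp
        omega
  choose u hadj hdist using key
  have hinj : Function.Injective
      (fun w : {w : V // w ≠ r} => (⟨s(w.1, u w.1 w.2), (hadj w.1 w.2)⟩ : G.edgeSet)) := by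
    intro w w' h
    rw [Subtype.ext_iff, Sym2.eq_iff] at h
    rcases h with ⟨h1, h2⟩ | ⟨h1, h2⟩
    · exact Subtype.ext h1
    · exfalso
      have d1 := hdist w.1 w.2
      have d2 := hdist w'.1 w'.2
      rw [← h1] at d2
      rw [h2] at d1
      omega
  have hcard : Fintype.card {w : V // w ≠ r} ≤ Nat.card G.edgeSet := by
    have := Fintype.card_le_of_injective _ hinj
    rwa [Nat.card_eq_fintype_card]
  have hc2 : Fintype.card {w : V // w ≠ r} = Fintype.card V - 1 := by
    rw [Fintype.card_subtype_compl, Fintype.card_subtype_eq]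
  have hc3 : Nat.card G.edgeSet = G.edgeSet.ncard := Nat.card_coe_set_eq _
  have hpos : 0 < Fintype.card V := Fintype.card_pos_iff.mpr ⟨r⟩
  omega

lemma edgeInDir_unique {n : ℕ} {i j : Fin n} {e : Sym2 (Finset (Fin n))}
    (hi : edgeInDir i e) (hj : edgeInDir j e) : i = j := by
  obtain ⟨X, rfl⟩ := hi
  obtain ⟨Y, hY⟩ := hj
  rw [Sym2.eq_iff] at hY
  have sing : ({i} : Finset (Fin n)) = {j} → i = j := fun h => Finset.singleton_injective h
  rcases hY with ⟨rfl, h2⟩ | ⟨h1, h2⟩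
  · exact sing ((symmDiff_right_injective X) h2)
  · apply sing
    have h3 : symmDiff X (symmDiff {i} {j}) = X := by
      rw [← symmDiff_assoc, h2, ← h1]
    rw [symmDiff_eq_left] at h3
    exact symmDiff_eq_bot.mp h3

/-- Every edge of the cube has a direction. -/
lemma cube_edge_dir {n : ℕ} {X Y : Finset (Fin n)} (h : (cube n).Adj X Y) :
    ∃ i : Fin n, Y = symmDiff X {i} := by
  obtain ⟨i, hi⟩ := Finset.card_eq_one.mp h
  exact ⟨i, by rw [← hi, symmDiff_symmDiff_cancel_left]⟩

lemma sum_dirCount {n : ℕ} (T : SimpleGraph (Finset (Fin n))) (K : Finset (Fin n)) :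
    ∑ i ∈ K, dirCount T i = {e | e ∈ T.edgeSet ∧ ∃ i ∈ K, edgeInDir i e}.ncard := by
  classical
  induction K using Finset.induction with
  | empty =>
      have h0 : {e | e ∈ T.edgeSet ∧ ∃ i ∈ (∅ : Finset (Fin n)), edgeInDir i e} = ∅ := by
        ext e; simp
      rw [h0, Finset.sum_empty, Set.ncard_empty]
  | @insert j K hj ih =>
      have hset : {e | e ∈ T.edgeSet ∧ ∃ i ∈ insert j K, edgeInDir i e} =
          {e | e ∈ T.edgeSet ∧ edgeInDir j e} ∪ {e | e ∈ T.edgeSet ∧ ∃ i ∈ K, edgeInDir i e} := by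
        ext e
        simp only [Set.mem_setOf_eq, Set.mem_union, Finset.mem_insert]
        constructor
        · rintro ⟨he, i, (rfl | hiK), hd⟩
          · exact Or.inl ⟨he, hd⟩
          · exact Or.inr ⟨he, i, hiK, hd⟩
        · rintro (⟨he, hd⟩ | ⟨he, i, hiK, hd⟩)
          · exact ⟨he, j, Or.inl rfl, hd⟩
          · exact ⟨he, i, Or.inr hiK, hd⟩
      have hdisj : Disjoint {e | e ∈ T.edgeSet ∧ edgeInDir j e}
          {e | e ∈ T.edgeSet ∧ ∃ i ∈ K, edgeInDir i e} := by
        rw [Set.disjoint_left]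
        rintro e ⟨-, hd⟩ ⟨-, i, hiK, hd'⟩
        exact hj (edgeInDir_unique hd hd' ▸ hiK)
      rw [Finset.sum_insert hj, ih, hset,
        Set.ncard_union_eq hdisj (Set.toFinite _) (Set.toFinite _)]
      rfl


lemma sum_dirCount_univ {n : ℕ} {T : SimpleGraph (Finset (Fin n))}
    (hT : IsSpanningTreeOf T (cube n)) :
    ∑ i : Fin n, dirCount T i = 2 ^ n - 1 := by
  classical
  rw [sum_dirCount]
  have hset : {e | e ∈ T.edgeSet ∧ ∃ i ∈ (Finset.univ : Finset (Fin n)), edgeInDir i e}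
      = T.edgeSet := by
    ext e
    simp only [Set.mem_setOf_eq, Finset.mem_univ, true_and, SimpleGraph.mem_edgeSet]
    refine ⟨fun h => h.1, fun he => ⟨he, ?_⟩⟩
    induction e with
    | h X Y =>
        have hc : (cube n).Adj X Y := hT.1 (T.mem_edgeSet.mp he)
        obtain ⟨i, hi⟩ := cube_edge_dir hc
        exact ⟨i, X, by rw [hi]⟩
  rw [hset]
  have : Fintype T.edgeSet := Fintype.ofFinite _
  have hcard := hT.2.card_edgeFinset
  rw [Fintype.card_finset, Fintype.card_fin] at hcard
  rw [Set.ncard_eq_toFinset_card']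
  have : T.edgeSet.toFinset = T.edgeFinset := by
    ext e; simp [SimpleGraph.mem_edgeFinset]
  rw [this]
  omega

lemma inter_lb {n : ℕ} {T : SimpleGraph (Finset (Fin n))}
    (hT : IsSpanningTreeOf T (cube n)) (K : Finset (Fin n)) :
    2 ^ K.card - 1 ≤ ∑ i ∈ K, dirCount T i := by
  classical
  set S := {W : Finset (Fin n) // W ⊆ K}
  set H : SimpleGraph S :=
    { Adj := fun A B => A ≠ B ∧ ∃ U V, T.Adj U V ∧ U ∩ K = A.1 ∧ V ∩ K = B.1,
      symm := by constructor; rintro A B ⟨h, U, V, h1, h2, h3⟩; exact ⟨h.symm, V, U, h1.symm, h3, h2⟩,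
      loopless := by constructor; rintro A ⟨h, -⟩; exact h rfl } with hH
  have hAdj : ∀ A B : S, H.Adj A B ↔
      (A ≠ B ∧ ∃ U V, T.Adj U V ∧ U ∩ K = A.1 ∧ V ∩ K = B.1) := fun A B => Iff.rfl
  -- connectivity of H
  have hreach : ∀ X Y : Finset (Fin n), T.Walk X Y →
      H.Reachable ⟨X ∩ K, Finset.inter_subset_right⟩ ⟨Y ∩ K, Finset.inter_subset_right⟩ := by
    intro X Y p
    induction p with
    | nil => exact SimpleGraph.Reachable.refl _
    | @cons uu vv ww h q ih =>
        by_cases hEq : uu ∩ K = vv ∩ K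
        · rw [show (⟨uu ∩ K, Finset.inter_subset_right⟩ : S)
            = ⟨vv ∩ K, Finset.inter_subset_right⟩ from Subtype.ext hEq]
          exact ih
        · refine SimpleGraph.Reachable.trans (SimpleGraph.Adj.reachable ?_) ih
          exact ⟨fun hc => hEq (congrArg Subtype.val hc), uu, vv, h, rfl, rfl⟩
  have hconn : H.Connected := by
    have hTconn : T.Connected := hT.2.isConnected
    rw [SimpleGraph.connected_iff]
    refine ⟨?_, ⟨⟨∅, Finset.empty_subset K⟩⟩⟩
    · intro A B
      obtain ⟨p⟩ := hTconn.preconnected A.1 B.1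
      have := hreach A.1 B.1 p
      rwa [show (⟨A.1 ∩ K, Finset.inter_subset_right⟩ : S) = A from
          Subtype.ext (Finset.inter_eq_left.mpr A.2),
        show (⟨B.1 ∩ K, Finset.inter_subset_right⟩ : S) = B from
          Subtype.ext (Finset.inter_eq_left.mpr B.2)] at this
  have hcardS : Fintype.card S = 2 ^ K.card := by
    rw [Fintype.card_subtype]
    rw [show Finset.filter (fun W => W ⊆ K) Finset.univ = K.powerset by
      ext W; simp [Finset.mem_powerset]]
    exact Finset.card_powerset K
  -- injection from H.edgeSet into the counted edge set
  set E := {e | e ∈ T.edgeSet ∧ ∃ i ∈ K, edgeInDir i e} with hE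
  have claim : ∀ f ∈ H.edgeSet, ∃ e ∈ E, Sym2.map (· ∩ K) e = Sym2.map Subtype.val f := by
    intro f hf
    induction f with
    | h A B =>
        rw [SimpleGraph.mem_edgeSet, hAdj] at hf
        obtain ⟨hne, U, V, hUV, hU, hV⟩ := hf
        have hcube : (cube n).Adj U V := hT.1 hUV
        obtain ⟨i, hi⟩ := cube_edge_dir hcube
        have hiK : i ∈ K := by
          by_contra hiK
          apply hne
          apply Subtype.ext
          rw [← hU, ← hV, hi]
          have hx : ∀ x ∈ K, x ≠ i := fun x hxK h => hiK (h ▸ hxK)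
          ext x
          simp only [Finset.mem_inter, Finset.mem_symmDiff, Finset.mem_singleton]
          constructor
          · rintro ⟨hxU, hxK⟩
            exact ⟨Or.inl ⟨hxU, hx x hxK⟩, hxK⟩
          · rintro ⟨h1 | h2, hxK⟩
            · exact ⟨h1.1, hxK⟩
            · exact absurd h2.1 (hx x hxK)
        refine ⟨s(U, V), ⟨T.mem_edgeSet.mpr hUV, i, hiK, U, by rw [hi]⟩, ?_⟩
        rw [Sym2.map_pair_eq, Sym2.map_pair_eq, hU, hV]
  choose g hgE hgmap using claim
  have hle1 : H.edgeSet.ncard ≤ E.ncard := by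
    set g' : Sym2 S → Sym2 (Finset (Fin n)) :=
      fun f => if h : f ∈ H.edgeSet then g f h else Sym2.map Subtype.val f
    refine Set.ncard_le_ncard_of_injOn g' ?_ ?_ (Set.toFinite _)
    · intro f hf
      simp only [g', dif_pos hf]
      exact hgE f hf
    · intro f hf f' hf' hEq
      simp only [g', dif_pos hf, dif_pos hf'] at hEq
      have : Sym2.map Subtype.val f = Sym2.map Subtype.val f' := by
        rw [← hgmap f hf, ← hgmap f' hf', hEq]
      exact Sym2.map.injective Subtype.val_injective this
  have hle2 : Fintype.card S ≤ H.edgeSet.ncard + 1 := aux_card_le_edges H hconn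
  rw [sum_dirCount, ← hE]
  rw [hcardS] at hle2
  omega


/-- The first `k` directions as a `Finset (Fin n)`. -/
def firstK (n k : ℕ) (hk : k ≤ n) : Finset (Fin n) :=
  (Finset.range k).attachFin (fun m hm => lt_of_lt_of_le (Finset.mem_range.mp hm) hk)

lemma mem_firstK {n k : ℕ} (hk : k ≤ n) (x : Fin n) : x ∈ firstK n k hk ↔ (x : ℕ) < k := by
  simp [firstK, Finset.mem_attachFin]

lemma firstK_card (n k : ℕ) (hk : k ≤ n) : (firstK n k hk).card = k := by
  simp [firstK, Finset.card_attachFin]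

lemma firstK_univ (n : ℕ) : firstK n n le_rfl = Finset.univ := by
  ext x; simp [mem_firstK, x.isLt]

lemma firstK_succ (n k : ℕ) (hk : k + 1 ≤ n) :
    firstK n (k + 1) hk = insert ⟨k, hk⟩ (firstK n k (Nat.le_of_succ_le hk)) := by
  ext x
  simp only [mem_firstK, Finset.mem_insert, Fin.ext_iff]
  omega

lemma sum_firstK_succ {n k : ℕ} (a : Fin n → ℕ) (hk : k + 1 ≤ n) :
    ∑ j ∈ firstK n (k + 1) hk, a j
      = (∑ j ∈ firstK n k (Nat.le_of_succ_le hk), a j) + a ⟨k, hk⟩ := by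
  rw [firstK_succ, Finset.sum_insert (by simp [mem_firstK])]
  omega

lemma sum_firstK_le {n k : ℕ} (a : Fin n → ℕ) (hmono : Monotone a) (K : Finset (Fin n))
    (hcard : K.card = k) (h : k ≤ n) :
    ∑ j ∈ firstK n k h, a j ≤ ∑ j ∈ K, a j := by
  classical
  subst hcard
  set f := K.orderEmbOfFin rfl with hf
  have key : ∀ m : ℕ, ∀ hm : m < K.card, m ≤ (f ⟨m, hm⟩ : ℕ) := by
    intro m
    induction m with
    | zero => intro hm; exact Nat.zero_le _
    | succ p ih =>
        intro hm
        have hp : p < K.card := Nat.lt_of_succ_lt hm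
        have h1 := ih hp
        have h2 : (f ⟨p, hp⟩ : ℕ) < (f ⟨p + 1, hm⟩ : ℕ) :=
          f.strictMono (Fin.mk_lt_mk.mpr (Nat.lt_succ_self p))
        omega
  have hK : K = Finset.image (fun t => f t) Finset.univ := by
    ext x
    simp only [Finset.mem_image, Finset.mem_univ, true_and]
    constructor
    · intro hx
      have : x ∈ Set.range (K.orderEmbOfFin rfl) := by
        rw [Finset.range_orderEmbOfFin]; exact hx
      exact this
    · rintro ⟨t, rfl⟩
      exact Finset.orderEmbOfFin_mem K rfl t
  have hF : firstK n K.card h = Finset.image (fun t : Fin K.card => Fin.castLE h t)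
      Finset.univ := by
    ext x
    simp only [mem_firstK, Finset.mem_image, Finset.mem_univ, true_and]
    constructor
    · intro hx; exact ⟨⟨(x : ℕ), hx⟩, by ext; simp⟩
    · rintro ⟨t, rfl⟩; simpa using t.isLt
  conv_lhs => rw [hF]
  conv_rhs => rw [hK]
  rw [Finset.sum_image (fun x _ y _ hxy => Fin.castLE_injective h hxy),
    Finset.sum_image (fun x _ y _ hxy => f.injective hxy)]
  apply Finset.sum_le_sum
  intro t _
  apply hmono
  rw [Fin.le_def]
  exact key t.1 t.2

/-- Lemma: nearby entries force excess at least 2. Let `n ≥ 4` and let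
`a` be an ordered irreducible signature of `Q_n`. If for some (paper, 1-based) index
`i ∈ {2, ..., n-1}` we have `a_{i+1} - a_i ≤ 1`, then `ε_i(a) ≥ 2`. Here the paper's
`a_i`, `a_{i+1}` are `a ⟨i-1, _⟩`, `a ⟨i, _⟩` in 0-based indexing. -/
theorem stmt7 (n : ℕ) (hn : 4 ≤ n) (a : Fin n → ℕ)
    (hsig : IsSignature n a) (hmono : Monotone a) (hirr : IsIrreducibleSig a)
    (i : ℕ) (hi1 : 2 ≤ i) (hi2 : i ≤ n - 1)
    (hstep : a ⟨i, by omega⟩ ≤ a ⟨i - 1, by omega⟩ + 1) :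
    2 ≤ excess a i := by
  classical
  obtain ⟨T, hT, hs⟩ := hsig
  have hin : i < n := by omega
  -- basic bounds on subset sums
  have hlb : ∀ K : Finset (Fin n), 2 ^ K.card - 1 ≤ ∑ j ∈ K, a j := by
    intro K
    rw [show ∑ j ∈ K, a j = ∑ j ∈ K, dirCount T j from
      Finset.sum_congr rfl fun j _ => (hs j).symm]
    exact inter_lb hT K
  have hlb' : ∀ K : Finset (Fin n), K.Nonempty → K ≠ Finset.univ →
      2 ^ K.card ≤ ∑ j ∈ K, a j := by
    intro K hne hKu
    have h1 := hlb K
    have h2 : ∑ j ∈ K, a j ≠ 2 ^ K.card - 1 := fun h => hirr ⟨K, hne, hKu, h⟩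
    have h3 : 1 ≤ 2 ^ K.card := Nat.one_le_two_pow
    omega
  have htot : ∑ j : Fin n, a j = 2 ^ n - 1 := by
    rw [show ∑ j : Fin n, a j = ∑ j : Fin n, dirCount T j from
      Finset.sum_congr rfl fun j _ => (hs j).symm]
    exact sum_dirCount_univ hT
  -- facts about firstK sums
  have hfirst : ∀ k : ℕ, ∀ hk : k ≤ n, 0 < k → k < n →
      2 ^ k ≤ ∑ j ∈ firstK n k hk, a j := by
    intro k hk h0 hkn
    have hc := firstK_card n k hk
    have hne : (firstK n k hk).Nonempty := by
      rw [← Finset.card_pos, hc]; exact h0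
    have hnu : firstK n k hk ≠ Finset.univ := by
      intro hu
      rw [hu, Finset.card_univ, Fintype.card_fin] at hc
      omega
    have := hlb' _ hne hnu
    rwa [hc] at this
  obtain ⟨m, rfl⟩ : ∃ m, i = m + 1 := ⟨i - 1, by omega⟩
  have hm1 : 1 ≤ m := by omega
  have pm : m ≤ n := by omega
  have pm1 : m + 1 ≤ n := by omega
  -- main claim : every K of size i has sum ≥ 2^i + 1
  have main : ∀ K : Finset (Fin n), K.card = m + 1 → 2 ^ (m + 1) + 1 ≤ ∑ j ∈ K, a j := by
    intro K hK
    have hmono' := sum_firstK_le a hmono K hK pm1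
    by_contra hcon
    push_neg at hcon
    have hSi : ∑ j ∈ firstK n (m + 1) pm1, a j = 2 ^ (m + 1) := by
      have hge := hfirst (m + 1) pm1 (by omega) (by omega)
      omega
    have hSm : 2 ^ m ≤ ∑ j ∈ firstK n m pm, a j :=
      hfirst m pm (by omega) (by omega)
    have hsplit : ∑ j ∈ firstK n (m + 1) pm1, a j
        = (∑ j ∈ firstK n m pm, a j) + a ⟨m, by omega⟩ :=
      sum_firstK_succ a pm1
    have hstep' : a ⟨m + 1, by omega⟩ ≤ a ⟨m, by omega⟩ + 1 := hstep
    have hpow : 2 ^ (m + 1) = 2 * 2 ^ m := by ring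
    have h2m : 2 ≤ 2 ^ m := by
      calc 2 = 2 ^ 1 := by norm_num
      _ ≤ 2 ^ m := Nat.pow_le_pow_right (by norm_num) hm1
    by_cases hcase : m + 2 < n
    · -- use the first i+1 = m+2 entries
      have pm2 : m + 1 + 1 ≤ n := by omega
      have hS2 : 2 ^ (m + 1 + 1) ≤ ∑ j ∈ firstK n (m + 1 + 1) pm2, a j :=
        hfirst (m + 1 + 1) pm2 (by omega) (by omega)
      have hsplit2 : ∑ j ∈ firstK n (m + 1 + 1) pm2, a j
          = (∑ j ∈ firstK n (m + 1) pm1, a j) + a ⟨m + 1, by omega⟩ :=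
        sum_firstK_succ a pm2
      have hpow2 : 2 ^ (m + 1 + 1) = 4 * 2 ^ m := by ring
      omega
    · -- i + 1 = n, use the total sum
      have hn2 : n = m + 2 := by omega
      have hm2 : 2 ≤ m := by omega
      have h4m : 4 ≤ 2 ^ m := by
        calc 4 = 2 ^ 2 := by norm_num
        _ ≤ 2 ^ m := Nat.pow_le_pow_right (by norm_num) hm2
      have pm2 : m + 1 + 1 ≤ n := by omega
      have hsplitn : ∑ j ∈ firstK n (m + 1 + 1) pm2, a j
          = (∑ j ∈ firstK n (m + 1) pm1, a j) + a ⟨m + 1, by omega⟩ :=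
        sum_firstK_succ a pm2
      have huniv : ∑ j ∈ firstK n (m + 1 + 1) pm2, a j = 2 ^ n - 1 := by
        rw [show firstK n (m + 1 + 1) pm2 = Finset.univ by
          subst hn2; exact firstK_univ (m + 2)]
        exact htot
      have hpown : 2 ^ n = 4 * 2 ^ m := by rw [hn2]; ring
      omega
  -- conclude about minSum and excess
  have hminS : 2 ^ (m + 1) + 1 ≤ minSum a (m + 1) := by
    have hne : {s : ℕ | ∃ K : Finset (Fin n), K.card = m + 1 ∧ ∑ j ∈ K, a j = s}.Nonempty :=
      ⟨∑ j ∈ firstK n (m + 1) pm1, a j, firstK n (m + 1) pm1,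
        firstK_card n (m + 1) pm1, rfl⟩
    obtain ⟨K, hK, hsum⟩ := Nat.sInf_mem hne
    unfold minSum
    rw [← hsum]
    exact main K hK
  unfold excess
  have hcast : ((2 : ℤ) ^ (m + 1) + 1) ≤ (minSum a (m + 1) : ℤ) := by exact_mod_cast hminS
  linarith
end

section
/- Let T be a spanning tree of Q_n and let R be a proper nonempty subset of [n]. Then T reduces over R if and only if T(R,X) is a spanning tree of Q_n(R,X) for every X ⊆ R. -/
open SimpleGraph

section AuxStmt9

variable {V : Type*} {n : ℕ}

private lemma aux_acyclic_sup_edge {H : SimpleGraph V} (hH : H.IsAcyclic) {a b : V}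
    (hr : ¬H.Reachable a b) : (H ⊔ SimpleGraph.edge a b).IsAcyclic := by
  have hab : a ≠ b := by rintro rfl; exact hr (Reachable.refl a)
  intro v c hc
  by_cases he : s(a, b) ∈ c.edges
  · have hbridge : (H ⊔ SimpleGraph.edge a b).IsBridge s(a, b) := by
      rw [isBridge_iff]
      intro hreach
      apply hr
      refine hreach.mono ?_
      intro x y hxy
      simp only [deleteEdges_adj, sdiff_adj, sup_adj, edge_adj, fromEdgeSet_adj, Set.mem_singleton_iff] at hxy
      obtain ⟨h1 | h1, h2⟩ := hxy
      · exact h1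
      · exact absurd (by rcases h1.1 with ⟨rfl,rfl⟩|⟨rfl,rfl⟩ <;> simp [Sym2.eq_swap]) h2
    rw [isBridge_iff_mem_and_forall_cycle_notMem (c.edges_subset_edgeSet he)] at hbridge
    exact hbridge c hc he
  · have hsub : ∀ e ∈ c.edges, e ∈ H.edgeSet := by
      intro e hec
      have := c.edges_subset_edgeSet hec
      rw [edgeSet_sup] at this
      rcases this with h | h
      · exact h
      · rw [SimpleGraph.edge, edgeSet_fromEdgeSet] at h
        obtain ⟨h1, -⟩ := h
        rw [Set.mem_singleton_iff] at h1
        exact absurd (h1 ▸ hec) he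
    exact hH (c.transfer H hsub) (hc.transfer hsub)

private lemma aux_exists_adj_not_reachable {G H : SimpleGraph V} :
    ∀ {u v : V}, G.Walk u v → ¬H.Reachable u v →
      ∃ a b, G.Adj a b ∧ ¬H.Reachable a b := by
  intro u v p
  induction p with
  | nil => intro h; exact absurd (Reachable.refl _) h
  | @cons x y z h p ih =>
    intro hr
    by_cases hw : H.Reachable x y
    · exact ih (fun h2 => hr (hw.trans h2))
    · exact ⟨_, _, h, hw⟩

private lemma aux_edgecard (G : SimpleGraph V) [x : Fintype G.edgeSet] :
    G.edgeSet.ncard = G.edgeFinset.card := by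
  rw [edgeFinset, Set.ncard_eq_toFinset_card']

private lemma aux_exists_tree_ext [Fintype V] {G : SimpleGraph V} (hG : G.Connected)
    (H : SimpleGraph V) (hle : H ≤ G) (ha : H.IsAcyclic) :
    ∃ T, H ≤ T ∧ T ≤ G ∧ T.IsTree := by
  classical
  suffices key : ∀ (k : ℕ) (H : SimpleGraph V),
      Fintype.card (Sym2 V) - H.edgeSet.ncard ≤ k →
      H ≤ G → H.IsAcyclic → ∃ T, H ≤ T ∧ T ≤ G ∧ T.IsTree by
    exact key _ H le_rfl hle ha
  intro k
  induction k with
  | zero =>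
    intro H hk hle ha
    by_cases hc : H.Connected
    · exact ⟨H, le_refl _, hle, hc, ha⟩
    · exfalso
      have hk0 : Fintype.card (Sym2 V) ≤ H.edgeFinset.card := by
        rw [← aux_edgecard]; omega
      have huniv : H.edgeFinset = Finset.univ :=
        Finset.eq_of_subset_of_card_le (Finset.subset_univ _) (by simpa using hk0)
      obtain ⟨v⟩ := hG.nonempty
      have : s(v, v) ∈ H.edgeFinset := huniv ▸ Finset.mem_univ _
      rw [mem_edgeFinset] at this
      exact H.irrefl this
  | succ k ih =>
    intro H hk hle ha
    by_cases hc : H.Connected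
    · exact ⟨H, le_refl _, hle, hc, ha⟩
    · have hpre : ¬H.Preconnected := fun hp => hc ((connected_iff H).mpr ⟨hp, hG.nonempty⟩)
      rw [Preconnected] at hpre
      push_neg at hpre
      obtain ⟨u, v, huv⟩ := hpre
      obtain ⟨a, b, hGab, hHab⟩ := aux_exists_adj_not_reachable ((hG.preconnected u v).some) huv
      have hab : a ≠ b := by rintro rfl; exact hHab (Reachable.refl a)
      have hnadj : ¬H.Adj a b := fun h => hHab h.reachable
      have hle' : H ⊔ SimpleGraph.edge a b ≤ G := by
        refine sup_le hle ?_
        intro x y hxy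
        rw [edge_adj] at hxy
        rcases hxy.1 with ⟨rfl, rfl⟩ | ⟨rfl, rfl⟩
        · exact hGab
        · exact hGab.symm
      have hcard := H.card_edgeFinset_sup_edge hnadj hab
      rw [← aux_edgecard, ← aux_edgecard] at hcard
      have hk' : Fintype.card (Sym2 V) - (H ⊔ SimpleGraph.edge a b).edgeSet.ncard ≤ k := by omega
      obtain ⟨T, hT1, hT2, hT3⟩ := ih (H ⊔ SimpleGraph.edge a b) hk' hle'
        (aux_acyclic_sup_edge ha hHab)
      exact ⟨T, le_trans le_sup_left hT1, hT2, hT3⟩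

private lemma aux_forest_card [Fintype V] {G H : SimpleGraph V} (hG : G.Connected) (hle : H ≤ G)
    (ha : H.IsAcyclic) :
    H.edgeSet.ncard + 1 ≤ Fintype.card V ∧
      (H.edgeSet.ncard + 1 = Fintype.card V → H.Connected) := by
  classical
  obtain ⟨T, h1, h2, h3⟩ := aux_exists_tree_ext hG H hle ha
  have ht := h3.card_edgeFinset
  rw [← aux_edgecard] at ht
  have hsub : H.edgeSet ⊆ T.edgeSet := edgeSet_mono h1
  have hle2 : H.edgeSet.ncard ≤ T.edgeSet.ncard :=
    Set.ncard_le_ncard hsub (T.edgeSet.toFinite)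
  constructor
  · omega
  · intro heq
    have hcc : H.edgeSet.ncard = T.edgeSet.ncard := by omega
    have hEeq : H.edgeSet = T.edgeSet :=
      Set.eq_of_subset_of_ncard_le hsub (le_of_eq hcc.symm) (T.edgeSet.toFinite)
    have : H = T := edgeSet_inj.mp hEeq
    rw [this]
    exact h3.isConnected

private lemma aux_induce_acyclic {G : SimpleGraph V} (ha : G.IsAcyclic) (s : Set V) :
    (G.induce s).IsAcyclic := by
  intro v c hc
  exact ha (c.map (Embedding.induce s).toHom) (hc.map Subtype.val_injective)

private lemma aux_edges_induce (G : SimpleGraph V) (s : Set V) :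
    Sym2.map (Subtype.val) '' (G.induce s).edgeSet = {e | e ∈ G.edgeSet ∧ ∀ v ∈ e, v ∈ s} := by
  ext e
  constructor
  · rintro ⟨f, hf, rfl⟩
    induction f with
    | _ U V =>
      rw [mem_edgeSet] at hf
      simp only [comap_adj] at hf
      refine ⟨by rwa [Sym2.map_pair_eq, mem_edgeSet], ?_⟩
      intro v hv
      rw [Sym2.map_pair_eq, Sym2.mem_iff] at hv
      rcases hv with rfl | rfl
      · exact U.2
      · exact V.2
  · intro he
    induction e with
    | _ U V =>
      obtain ⟨h1, h2⟩ := he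
      have hU : U ∈ s := h2 U (Sym2.mem_mk_left U V)
      have hV : V ∈ s := h2 V (Sym2.mem_mk_right U V)
      refine ⟨s(⟨U, hU⟩, ⟨V, hV⟩), ?_, by rw [Sym2.map_pair_eq]⟩
      rw [mem_edgeSet, comap_adj]
      exact h1

private lemma aux_ncard_edges_induce (G : SimpleGraph V) (s : Set V) :
    (G.induce s).edgeSet.ncard = {e | e ∈ G.edgeSet ∧ ∀ v ∈ e, v ∈ s}.ncard := by
  rw [← aux_edges_induce, Set.ncard_image_of_injective _ (Sym2.map.injective Subtype.val_injective)]

private lemma aux_edgeInDir_iff (i : Fin n) (X Y : Finset (Fin n)) :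
    edgeInDir i s(X, Y) ↔ symmDiff X Y = {i} := by
  constructor
  · rintro ⟨Z, hZ⟩
    rw [Sym2.eq_iff] at hZ
    rcases hZ with ⟨rfl, rfl⟩ | ⟨h1, rfl⟩
    · exact symmDiff_symmDiff_cancel_left _ _
    · rw [h1, symmDiff_comm]
      exact symmDiff_symmDiff_cancel_left _ _
  · intro h
    exact ⟨X, by rw [← h, symmDiff_symmDiff_cancel_left]⟩

private lemma aux_inter_symmDiff (U W R : Finset (Fin n)) :
    (symmDiff U W) ∩ R = symmDiff (U ∩ R) (W ∩ R) := by
  ext a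
  simp only [Finset.mem_inter, Finset.mem_symmDiff]
  tauto

private lemma aux_symmDiff_singleton_erase {S : Finset (Fin n)} {d : Fin n} (hd : d ∈ S) :
    symmDiff S {d} = S.erase d := by
  ext a
  simp only [Finset.mem_symmDiff, Finset.mem_singleton, Finset.mem_erase]
  constructor
  · rintro (⟨h1, h2⟩ | ⟨rfl, h2⟩)
    · exact ⟨h2, h1⟩
    · exact absurd hd h2
  · rintro ⟨h1, h2⟩
    exact Or.inl ⟨h2, h1⟩

private lemma aux_subcube_connected (R X : Finset (Fin n)) (hX : X ⊆ R) :
    ((cube n).induce {W : Finset (Fin n) | W ∩ R = X}).Connected := by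
  have hXX : X ∈ {W : Finset (Fin n) | W ∩ R = X} := Finset.inter_eq_left.mpr hX
  rw [connected_iff]
  refine ⟨?_, ⟨⟨X, hXX⟩⟩⟩
  have key : ∀ (k : ℕ) (A B : {W : Finset (Fin n) | W ∩ R = X}),
      (symmDiff A.1 B.1).card = k →
      ((cube n).induce {W : Finset (Fin n) | W ∩ R = X}).Reachable A B := by
    intro k
    induction k with
    | zero =>
      intro A B h
      rw [Finset.card_eq_zero, ← Finset.bot_eq_empty, symmDiff_eq_bot] at h
      have hAB : A = B := Subtype.ext h
      rw [hAB]
    | succ k ih =>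
      intro A B h
      obtain ⟨d, hd⟩ := Finset.card_pos.mp (by omega : 0 < (symmDiff A.1 B.1).card)
      have hdR : d ∉ R := by
        intro hdR
        have h0 : (symmDiff A.1 B.1) ∩ R = ∅ := by
          rw [aux_inter_symmDiff, A.2, B.2, symmDiff_self, Finset.bot_eq_empty]
        have : d ∈ (symmDiff A.1 B.1) ∩ R := Finset.mem_inter.mpr ⟨hd, hdR⟩
        rw [h0] at this
        exact absurd this (Finset.notMem_empty d)
      have hA' : symmDiff A.1 {d} ∈ {W : Finset (Fin n) | W ∩ R = X} := by
        have : {d} ∩ R = ∅ := by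
          rw [Finset.singleton_inter_of_notMem hdR]
        show (symmDiff A.1 {d}) ∩ R = X
        rw [aux_inter_symmDiff, this, ← Finset.bot_eq_empty, symmDiff_bot, A.2]
      set A' : {W : Finset (Fin n) | W ∩ R = X} := ⟨symmDiff A.1 {d}, hA'⟩ with hA'def
      have hadj : ((cube n).induce {W : Finset (Fin n) | W ∩ R = X}).Adj A A' := by
        rw [comap_adj]
        show (symmDiff A.1 (symmDiff A.1 {d})).card = 1
        rw [symmDiff_symmDiff_cancel_left, Finset.card_singleton]
      have hcard : (symmDiff A'.1 B.1).card = k := by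
        have h1 : symmDiff A'.1 B.1 = (symmDiff A.1 B.1).erase d := by
          rw [hA'def]
          show symmDiff (symmDiff A.1 {d}) B.1 = _
          have hd' := hd
          ext a
          simp only [Finset.mem_symmDiff, Finset.mem_erase, Finset.mem_singleton] at hd' ⊢
          by_cases had : a = d
          · subst had
            tauto
          · simp only [had]
            tauto
        rw [h1, Finset.card_erase_of_mem hd, h]
        omega
      exact hadj.reachable.trans (ih A' B hcard)
  intro A B
  exact key _ A B rfl

private lemma aux_card_subcube (R X : Finset (Fin n)) (hX : X ⊆ R) :
    Nat.card {W : Finset (Fin n) | W ∩ R = X} = 2 ^ (n - R.card) := by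
  have e : {W : Finset (Fin n) | W ∩ R = X} ≃ {S : Finset (Fin n) // S ∈ Rᶜ.powerset} :=
    { toFun := fun W => ⟨W.1 \ R, by
        rw [Finset.mem_powerset]
        intro a ha
        rw [Finset.mem_sdiff] at ha
        exact Finset.mem_compl.mpr ha.2⟩
      invFun := fun S => ⟨S.1 ∪ X, by
        have hS : ∀ a ∈ S.1, a ∉ R := by
          intro a ha
          exact Finset.mem_compl.mp (Finset.mem_powerset.mp S.2 ha)
        show (S.1 ∪ X) ∩ R = X
        ext a
        simp only [Finset.mem_inter, Finset.mem_union]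
        constructor
        · rintro ⟨h1 | h1, h2⟩
          · exact absurd h2 (hS a h1)
          · exact h1
        · intro h
          exact ⟨Or.inr h, hX h⟩⟩
      left_inv := fun W => by
        have hW : W.1 ∩ R = X := W.2
        apply Subtype.ext
        show (W.1 \ R) ∪ X = W.1
        ext a
        simp only [Finset.mem_union, Finset.mem_sdiff]
        constructor
        · rintro (⟨h1, -⟩ | h1)
          · exact h1
          · rw [← hW] at h1
            exact (Finset.mem_inter.mp h1).1
        · intro h
          by_cases haR : a ∈ R
          · exact Or.inr (by rw [← hW]; exact Finset.mem_inter.mpr ⟨h, haR⟩)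
          · exact Or.inl ⟨h, haR⟩
      right_inv := fun S => by
        have hS : ∀ a ∈ S.1, a ∉ R := by
          intro a ha
          exact Finset.mem_compl.mp (Finset.mem_powerset.mp S.2 ha)
        apply Subtype.ext
        show (S.1 ∪ X) \ R = S.1
        ext a
        simp only [Finset.mem_sdiff, Finset.mem_union]
        constructor
        · rintro ⟨h1 | h1, h2⟩
          · exact h1
          · exact absurd (hX h1) h2
        · intro h
          exact ⟨Or.inl h, hS a h⟩ }
  rw [Nat.card_congr e, Nat.card_eq_fintype_card, Fintype.card_coe,
    Finset.card_powerset, Finset.card_compl, Fintype.card_fin]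

private lemma aux_edgeInDir_unique {i j : Fin n} {e : Sym2 (Finset (Fin n))}
    (h1 : edgeInDir i e) (h2 : edgeInDir j e) : i = j := by
  induction e using Sym2.ind with
  | _ U W =>
    rw [aux_edgeInDir_iff] at h1 h2
    rw [h1] at h2
    exact Finset.singleton_injective h2

end AuxStmt9

set_option maxHeartbeats 2000000 in
/-- Theorem: structural characterisation of reducible trees.
A spanning tree `T` of `Q_n` reduces over the proper nonempty subset `R` iff for every
`X ⊆ R` the restriction `T(R,X)` is a spanning tree of the subcube `Q_n(R,X)`. -/
theorem stmt9 (n : ℕ) (R : Finset (Fin n)) (hR1 : R.Nonempty) (hR2 : R ≠ Finset.univ)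
    (T : SimpleGraph (Finset (Fin n))) (hT : IsSpanningTreeOf T (cube n)) :
    ReducesOver (fun i => dirCount T i) R ↔
      ∀ X ⊆ R,
        IsSpanningTreeOf (T.induce {W : Finset (Fin n) | W ∩ R = X})
          ((cube n).induce {W : Finset (Fin n) | W ∩ R = X}) := by
  classical
  obtain ⟨hle, htree⟩ := hT
  set M := 2 ^ (n - R.card) with hM
  set E := T.edgeFinset with hE
  -- total edge count
  have hE1 : E.card + 1 = 2 ^ n := by
    have := htree.card_edgeFinset
    rwa [Fintype.card_finset, Fintype.card_fin] at this
  -- each piece: basic facts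
  have hpiece : ∀ X ⊆ R,
      ((T.induce {W : Finset (Fin n) | W ∩ R = X}).edgeSet.ncard + 1 ≤ M ∧
        ((T.induce {W : Finset (Fin n) | W ∩ R = X}).edgeSet.ncard + 1 = M ↔
          IsSpanningTreeOf (T.induce {W : Finset (Fin n) | W ∩ R = X})
            ((cube n).induce {W : Finset (Fin n) | W ∩ R = X}))) := by
    intro X hX
    have hconn := aux_subcube_connected R X hX
    have hsle : T.induce {W : Finset (Fin n) | W ∩ R = X} ≤
        (cube n).induce {W : Finset (Fin n) | W ∩ R = X} := by
      intro a b hab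
      rw [comap_adj] at hab ⊢
      exact hle hab
    have hacy := aux_induce_acyclic htree.2 {W : Finset (Fin n) | W ∩ R = X}
    have hcV : Fintype.card {W : Finset (Fin n) | W ∩ R = X} = M := by
      rw [← Nat.card_eq_fintype_card, aux_card_subcube R X hX]
    obtain ⟨hb1, hb2⟩ := aux_forest_card hconn hsle hacy
    rw [hcV] at hb1 hb2
    refine ⟨hb1, ?_, ?_⟩
    · intro heq
      exact ⟨hsle, hb2 heq, hacy⟩
    · rintro ⟨-, htree', -⟩
      have h3 : (T.induce {W : Finset (Fin n) | W ∩ R = X}).IsTree := ⟨htree', hacy⟩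
      have := h3.card_edgeFinset
      rw [← aux_edgecard, hcV] at this
      exact this
  -- counting: partition of the edges of T
  set P : Sym2 (Finset (Fin n)) → Prop := fun e => ∃ i ∈ R, edgeInDir i e with hP
  have hsplit : (E.filter P).card + (E.filter (fun e => ¬ P e)).card = E.card :=
    Finset.card_filter_add_card_filter_not (p := P)
  have hdir : ∀ i : Fin n, dirCount T i = (E.filter (fun e => edgeInDir i e)).card := by
    intro i
    have hs : {e | e ∈ T.edgeSet ∧ edgeInDir i e} =
        ↑(E.filter (fun e => edgeInDir i e)) := by
      ext e
      simp [hE, Finset.mem_filter, Set.mem_setOf_eq, mem_edgeFinset]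
    rw [dirCount, hs, Set.ncard_coe_finset]
  have hPcard : (E.filter P).card = ∑ i ∈ R, dirCount T i := by
    have hbu : E.filter P = R.biUnion (fun i => E.filter (fun e => edgeInDir i e)) := by
      ext e
      simp only [Finset.mem_filter, Finset.mem_biUnion, hP]
      tauto
    rw [hbu, Finset.card_biUnion]
    · exact Finset.sum_congr rfl (fun i _ => (hdir i).symm)
    · intro i _ j _ hij
      rw [Function.onFun, Finset.disjoint_left]
      intro e he1 he2
      rw [Finset.mem_filter] at he1 he2
      exact hij (aux_edgeInDir_unique he1.2 he2.2)
  have hQcard : (E.filter (fun e => ¬ P e)).card =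
      ∑ X ∈ R.powerset, (E.filter (fun e => ∀ v ∈ e, v ∩ R = X)).card := by
    have hbu : E.filter (fun e => ¬ P e) =
        R.powerset.biUnion (fun X => E.filter (fun e => ∀ v ∈ e, v ∩ R = X)) := by
      ext e
      induction e using Sym2.ind with
      | _ U W =>
        simp only [Finset.mem_filter, Finset.mem_biUnion, Finset.mem_powerset, hP]
        constructor
        · rintro ⟨he, hnp⟩
          have hcube : (cube n).Adj U W := hle (mem_edgeFinset.mp he)
          obtain ⟨d, hd⟩ := Finset.card_eq_one.mp hcube
          have hdR : d ∉ R := by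
            intro hdR
            exact hnp ⟨d, hdR, (aux_edgeInDir_iff d U W).mpr hd⟩
          have hUW : U ∩ R = W ∩ R := by
            have h0 : symmDiff (U ∩ R) (W ∩ R) = ∅ := by
              rw [← aux_inter_symmDiff, hd, Finset.singleton_inter_of_notMem hdR]
            rwa [← Finset.bot_eq_empty, symmDiff_eq_bot] at h0
          refine ⟨U ∩ R, Finset.inter_subset_right, he, ?_⟩
          intro v hv
          rw [Sym2.mem_iff] at hv
          rcases hv with rfl | rfl
          · rfl
          · exact hUW.symm
        · rintro ⟨X, hXR, he, hall⟩
          refine ⟨he, ?_⟩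
          rintro ⟨i, hiR, hdir'⟩
          rw [aux_edgeInDir_iff] at hdir'
          have h1 : U ∩ R = X := hall U (Sym2.mem_mk_left U W)
          have h2 : W ∩ R = X := hall W (Sym2.mem_mk_right U W)
          have h0 : (symmDiff U W) ∩ R = ∅ := by
            rw [aux_inter_symmDiff, h1, h2, symmDiff_self, Finset.bot_eq_empty]
          rw [hdir'] at h0
          rw [Finset.singleton_inter_of_mem hiR] at h0
          exact absurd h0 (Finset.singleton_ne_empty i)
    rw [hbu, Finset.card_biUnion]
    intro X _ Y _ hXY
    rw [Function.onFun, Finset.disjoint_left]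
    intro e he1 he2
    rw [Finset.mem_filter] at he1 he2
    exact hXY ((he1.2 e.out.1 e.out_fst_mem).symm.trans (he2.2 e.out.1 e.out_fst_mem))
  have hCX : ∀ X ∈ R.powerset,
      (E.filter (fun e => ∀ v ∈ e, v ∩ R = X)).card =
        (T.induce {W : Finset (Fin n) | W ∩ R = X}).edgeSet.ncard := by
    intro X hXR
    rw [aux_ncard_edges_induce]
    have hs : {e | e ∈ T.edgeSet ∧ ∀ v ∈ e, v ∈ {W : Finset (Fin n) | W ∩ R = X}} =
        ↑(E.filter (fun e => ∀ v ∈ e, v ∩ R = X)) := by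
      ext e
      simp [hE, Finset.mem_filter, Set.mem_setOf_eq, mem_edgeFinset]
    rw [hs, Set.ncard_coe_finset]
  -- arithmetic preliminaries
  have hRn : R.card ≤ n := by
    simpa using R.card_le_univ
  have hpowR : R.powerset.card = 2 ^ R.card := Finset.card_powerset R
  have hMtot : 2 ^ R.card * M = 2 ^ n := by
    rw [hM, ← pow_add]
    congr 1
    omega
  have hpos : 0 < 2 ^ R.card := Nat.pow_pos (by norm_num)
  have hMpos : 0 < M := Nat.pow_pos (by norm_num)
  -- the master identity
  have master : ∑ i ∈ R, dirCount T i +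
      ∑ X ∈ R.powerset, ((T.induce {W : Finset (Fin n) | W ∩ R = X}).edgeSet.ncard + 1)
        = 2 ^ n + 2 ^ R.card - 1 := by
    rw [Finset.sum_add_distrib, Finset.sum_const, smul_eq_mul, mul_one,
      ← Finset.sum_congr rfl hCX, hpowR]
    omega
  constructor
  · -- reduces → spanning trees
    intro hred
    have hred' : ∑ i ∈ R, dirCount T i = 2 ^ R.card - 1 := hred
    have hsum : ∑ X ∈ R.powerset,
        ((T.induce {W : Finset (Fin n) | W ∩ R = X}).edgeSet.ncard + 1) = 2 ^ n := by omega
    have hsumM : ∑ X ∈ R.powerset, M = 2 ^ n := by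
      rw [Finset.sum_const, smul_eq_mul, hpowR, hMtot]
    have hequal := (Finset.sum_eq_sum_iff_of_le
      (fun X hX => (hpiece X (Finset.mem_powerset.mp hX)).1)).mp (hsum.trans hsumM.symm)
    intro X hX
    exact ((hpiece X hX).2).mp (hequal X (Finset.mem_powerset.mpr hX))
  · -- spanning trees → reduces
    intro hst
    have hsum : ∑ X ∈ R.powerset,
        ((T.induce {W : Finset (Fin n) | W ∩ R = X}).edgeSet.ncard + 1) = 2 ^ n := by
      have : ∀ X ∈ R.powerset,
          (T.induce {W : Finset (Fin n) | W ∩ R = X}).edgeSet.ncard + 1 = M := by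
        intro X hX
        exact ((hpiece X (Finset.mem_powerset.mp hX)).2).mpr (hst X (Finset.mem_powerset.mp hX))
      rw [Finset.sum_congr rfl this, Finset.sum_const, smul_eq_mul, hpowR, hMtot]
    show ∑ i ∈ R, dirCount T i = 2 ^ R.card - 1
    omega
end
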